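/- arXiv:1612.01929 — 6 statements merged into one kernel-verified Lean document; each statement's English description precedes it below -/
import Mathlib

section
/- Let q be a prime power, n a positive integer, and let S and T be subsets of F_q^n. Then there exist a subset S' of S and a subset T' of T such that |S'| + |T'| ≤ M(F_q^n) and (S' + T) ∪ (S + T') = S + T, where S + T denotes the sumset {s + t : s ∈ S, t ∈ T}. -/
open Pointwise

/-- `mCount q n d` is the number of monomials in `x₁, …, xₙ` with degree at most `q - 1`
in each variable and total degree at most `d`. -/
noncomputable def mCount (q n : ℕ) (d : ℝ) : ℕ :=
  Nat.card {a : Fin n → ℕ // (∀ i, a i ≤ q - 1) ∧ ((∑ i, a i : ℕ) : ℝ) ≤ d}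

/-- `Mbound q n = 3 ⬝ m_{(q-1)n/3}`, the Ellenberg–Gijswijt bound for `𝔽_q^n`. -/
noncomputable def Mbound (q n : ℕ) : ℕ := 3 * mCount q n (((q : ℝ) - 1) * n / 3)

namespace EllSum

open scoped Classical

variable {F : Type*} [Field F] [Fintype F] {n : ℕ}

/-- Exponent triples for monomials in x, y, w. -/
abbrev T3 (n : ℕ) := (Fin n → ℕ) × (Fin n → ℕ) × (Fin n → ℕ)

def Mono (t : T3 n) (x y w : Fin n → F) : F :=
  (∏ i, x i ^ t.1 i) * (∏ i, y i ^ t.2.1 i) * (∏ i, w i ^ t.2.2 i)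

/-- Representability with per-coordinate degree bounds. -/
def RepB (d : Fin n → ℕ) (f : (Fin n → F) → (Fin n → F) → (Fin n → F) → F) : Prop :=
  ∃ (k : ℕ) (ex : Fin k → T3 n) (e : Fin k → F),
    (∀ j i, (ex j).1 i + (ex j).2.1 i + (ex j).2.2 i ≤ d i) ∧
    ∀ x y w, f x y w = ∑ j, e j * Mono (ex j) x y w

lemma mono_zero (x y w : Fin n → F) :
    Mono ((0 : Fin n → ℕ), (0 : Fin n → ℕ), (0 : Fin n → ℕ)) x y w = 1 := by
  simp [Mono]

lemma mono_add (t s : T3 n) (x y w : Fin n → F) :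
    Mono (t.1 + s.1, t.2.1 + s.2.1, t.2.2 + s.2.2) x y w = Mono t x y w * Mono s x y w := by
  simp only [Mono, Pi.add_apply, pow_add, Finset.prod_mul_distrib]
  ring

lemma repB_congr {d : Fin n → ℕ} {f g : (Fin n → F) → (Fin n → F) → (Fin n → F) → F}
    (h : RepB d f) (hfg : ∀ x y w, f x y w = g x y w) : RepB d g := by
  obtain ⟨k, ex, e, hb, hi⟩ := h
  exact ⟨k, ex, e, hb, fun x y w => (hfg x y w) ▸ hi x y w⟩

lemma repB_mono {d d' : Fin n → ℕ} {f : (Fin n → F) → (Fin n → F) → (Fin n → F) → F}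
    (hdd : ∀ i, d i ≤ d' i) (h : RepB d f) : RepB d' f := by
  obtain ⟨k, ex, e, hb, hi⟩ := h
  exact ⟨k, ex, e, fun j i => le_trans (hb j i) (hdd i), hi⟩

lemma repB_const (d : Fin n → ℕ) (cst : F) : RepB d (fun _ _ _ => cst) := by
  refine ⟨1, fun _ => (0, 0, 0), fun _ => cst, fun j i => by simp, fun x y w => ?_⟩
  simp [Mono]

lemma repB_smul {d : Fin n → ℕ} {f : (Fin n → F) → (Fin n → F) → (Fin n → F) → F}
    (cst : F) (h : RepB d f) : RepB d (fun x y w => cst * f x y w) := by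
  obtain ⟨k, ex, e, hb, hi⟩ := h
  refine ⟨k, ex, fun j => cst * e j, hb, fun x y w => ?_⟩
  dsimp only
  rw [hi, Finset.mul_sum]
  exact Finset.sum_congr rfl fun j _ => by ring

lemma repB_add {d : Fin n → ℕ} {f g : (Fin n → F) → (Fin n → F) → (Fin n → F) → F}
    (hf : RepB d f) (hg : RepB d g) : RepB d (fun x y w => f x y w + g x y w) := by
  obtain ⟨k1, ex1, e1, hb1, hi1⟩ := hf
  obtain ⟨k2, ex2, e2, hb2, hi2⟩ := hg
  refine ⟨k1 + k2, Fin.addCases ex1 ex2, Fin.addCases e1 e2, ?_, fun x y w => ?_⟩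
  · intro j i
    refine Fin.addCases (fun j1 => ?_) (fun j2 => ?_) j
    · simpa using hb1 j1 i
    · simpa using hb2 j2 i
  · dsimp only
    rw [hi1, hi2, Fin.sum_univ_add]
    simp

lemma repB_sub {d : Fin n → ℕ} {f g : (Fin n → F) → (Fin n → F) → (Fin n → F) → F}
    (hf : RepB d f) (hg : RepB d g) : RepB d (fun x y w => f x y w - g x y w) := by
  have := repB_add hf (repB_smul (-1 : F) hg)
  exact repB_congr this (fun x y w => by ring)

lemma repB_mul {d1 d2 : Fin n → ℕ} {f g : (Fin n → F) → (Fin n → F) → (Fin n → F) → F}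
    (hf : RepB d1 f) (hg : RepB d2 g) :
    RepB (d1 + d2) (fun x y w => f x y w * g x y w) := by
  obtain ⟨k1, ex1, e1, hb1, hi1⟩ := hf
  obtain ⟨k2, ex2, e2, hb2, hi2⟩ := hg
  refine ⟨k1 * k2, fun j => (let p := finProdFinEquiv.symm j;
      ((ex1 p.1).1 + (ex2 p.2).1, (ex1 p.1).2.1 + (ex2 p.2).2.1,
        (ex1 p.1).2.2 + (ex2 p.2).2.2)),
    fun j => e1 (finProdFinEquiv.symm j).1 * e2 (finProdFinEquiv.symm j).2,
    ?_, fun x y w => ?_⟩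
  · intro j i
    simp only [Pi.add_apply]
    have h1 := hb1 (finProdFinEquiv.symm j).1 i
    have h2 := hb2 (finProdFinEquiv.symm j).2 i
    omega
  · dsimp only
    rw [hi1, hi2, Finset.sum_mul_sum]
    rw [show (∑ i : Fin k1, ∑ j : Fin k2, e1 i * Mono (ex1 i) x y w * (e2 j * Mono (ex2 j) x y w))
        = ∑ p : Fin k1 × Fin k2, e1 p.1 * Mono (ex1 p.1) x y w * (e2 p.2 * Mono (ex2 p.2) x y w)
      from (Fintype.sum_prod_type' _).symm]
    refine Fintype.sum_equiv finProdFinEquiv _ _ fun p => ?_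
    simp only [Equiv.symm_apply_apply]
    rw [mono_add]
    ring

lemma repB_pow {d : Fin n → ℕ} {f : (Fin n → F) → (Fin n → F) → (Fin n → F) → F}
    (hf : RepB d f) : ∀ k : ℕ, RepB (fun i => k * d i) (fun x y w => f x y w ^ k) := by
  intro k
  induction k with
  | zero =>
    refine repB_congr (repB_const (fun i => 0 * d i) 1) (fun x y w => by simp)
  | succ k ih =>
    have := repB_mul ih hf
    refine repB_congr (repB_mono (d := (fun i => k * d i) + d) ?_ this) (fun x y w => by ring)
    intro i; simp [Nat.succ_mul]

lemma repB_prod {s : Finset (Fin n)} {dF : Fin n → Fin n → ℕ}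
    {fF : Fin n → (Fin n → F) → (Fin n → F) → (Fin n → F) → F}
    (h : ∀ i ∈ s, RepB (dF i) (fF i)) :
    RepB (fun i' => ∑ i ∈ s, dF i i') (fun x y w => ∏ i ∈ s, fF i x y w) := by
  classical
  induction s using Finset.induction_on with
  | empty =>
    exact repB_congr (repB_const _ 1) (fun x y w => by simp)
  | insert a s' hnotmem ih =>
    have h1 := h a (Finset.mem_insert_self a s')
    have h2 := ih (fun i hi => h i (Finset.mem_insert_of_mem hi))
    have := repB_mul h1 h2
    refine repB_congr (repB_mono ?_ this) (fun x y w => ?_)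
    · intro i; rw [Finset.sum_insert hnotmem]; exact le_rfl
    · rw [Finset.prod_insert hnotmem]

lemma repB_X (i0 : Fin n) : RepB (Pi.single i0 1) (fun x (_ _ : Fin n → F) => x i0) := by
  refine ⟨1, fun _ => (Pi.single i0 1, 0, 0), fun _ => 1, fun j i => by
    simp [Pi.single_apply], fun x y w => ?_⟩
  simp only [Fin.sum_univ_one, one_mul, Mono]
  simp [Pi.single_apply, pow_ite]

lemma repB_Y (i0 : Fin n) : RepB (Pi.single i0 1) (fun (_ : Fin n → F) y (_ : Fin n → F) => y i0) := by
  refine ⟨1, fun _ => (0, Pi.single i0 1, 0), fun _ => 1, fun j i => by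
    simp [Pi.single_apply], fun x y w => ?_⟩
  simp only [Fin.sum_univ_one, one_mul, Mono]
  simp [Pi.single_apply, pow_ite]

lemma repB_W (i0 : Fin n) : RepB (Pi.single i0 1) (fun (_ _ : Fin n → F) w => w i0) := by
  refine ⟨1, fun _ => (0, 0, Pi.single i0 1), fun _ => 1, fun j i => by
    simp [Pi.single_apply], fun x y w => ?_⟩
  simp only [Fin.sum_univ_one, one_mul, Mono]
  simp [Pi.single_apply, pow_ite]

/-- The indicator of `x + y = w`. -/
noncomputable def dd (x y w : Fin n → F) : F := if x + y = w then 1 else 0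

lemma dd_eq_prod {q : ℕ} (hq : 2 ≤ q) (hF : Fintype.card F = q) (x y w : Fin n → F) :
    dd x y w = ∏ i, (1 - (x i + y i - w i) ^ (q - 1)) := by
  unfold dd
  by_cases h : x + y = w
  · rw [if_pos h]
    have : ∀ i, x i + y i - w i = 0 := by
      intro i
      have := congrFun h i
      simp only [Pi.add_apply] at this
      rw [this]; ring
    rw [Finset.prod_congr rfl (fun i _ => by rw [this i])]
    rw [zero_pow (by omega), sub_zero]
    simp
  · rw [if_neg h]
    obtain ⟨i, hi⟩ := Function.ne_iff.mp h
    have hne : x i + y i - w i ≠ 0 := by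
      simp only [Pi.add_apply] at hi
      intro hc
      apply hi
      have := sub_eq_zero.mp hc
      exact this
    refine (Finset.prod_eq_zero (Finset.mem_univ i) ?_).symm
    have := FiniteField.pow_card_sub_one_eq_one _ hne
    rw [hF] at this
    rw [this]; ring

lemma repB_dd {q : ℕ} (hq : 2 ≤ q) (hF : Fintype.card F = q) :
    RepB (fun _ : Fin n => q - 1) (dd (F := F) (n := n)) := by
  have hfac : ∀ i0 : Fin n, RepB (fun i' => (q - 1) * (Pi.single i0 1 : Fin n → ℕ) i')
      (fun x y w : Fin n → F => 1 - (x i0 + y i0 - w i0) ^ (q - 1)) := by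
    intro i0
    have h1 : RepB (Pi.single i0 1) (fun x y w : Fin n → F => x i0 + y i0 - w i0) :=
      repB_sub (repB_add (repB_X i0) (repB_Y i0)) (repB_W i0)
    have h2 := repB_pow h1 (q - 1)
    have h3 := repB_sub
      (repB_const (fun i' => (q - 1) * (Pi.single i0 1 : Fin n → ℕ) i') 1) h2
    exact h3
  have hprod := repB_prod (s := Finset.univ) (fun i _ => hfac i)
  refine repB_congr (repB_mono ?_ hprod) ?_
  · intro i
    have heq : (∑ j, (q - 1) * (Pi.single j 1 : Fin n → ℕ) i) = q - 1 := by
      rw [← Finset.mul_sum]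
      have h1 : (∑ j, (Pi.single j 1 : Fin n → ℕ) i) = 1 := by
        simp [Pi.single_apply]
      rw [h1, mul_one]
    exact le_of_eq heq
  · intro x y w
    exact (dd_eq_prod hq hF x y w).symm

/-- Cardinality bound via `mCount`. -/
lemma card_le_mCount (q n : ℕ) (hq : 1 ≤ q) (d3 : ℝ) (A : Finset (Fin n → ℕ))
    (hA : ∀ a ∈ A, (∀ i, a i ≤ q - 1) ∧ ((∑ i, a i : ℕ) : ℝ) ≤ d3) :
    A.card ≤ mCount q n d3 := by
  classical
  unfold mCount
  have hfin : Finite {a : Fin n → ℕ // (∀ i, a i ≤ q - 1) ∧ ((∑ i, a i : ℕ) : ℝ) ≤ d3} := by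
    refine Finite.of_injective
      (fun a => (fun i => (⟨a.1 i, by have := a.2.1 i; omega⟩ : Fin q))) ?_
    intro a b hab
    ext i
    have := congrFun hab i
    simpa using congrArg Fin.val this
  have : A.card = Nat.card ↥A := (Nat.card_eq_finsetCard A).symm
  rw [this]
  refine Nat.card_le_card_of_injective
    (fun a => (⟨a.1, hA a.1 a.2⟩ :
      {a : Fin n → ℕ // (∀ i, a i ≤ q - 1) ∧ ((∑ i, a i : ℕ) : ℝ) ≤ d3})) ?_
  intro a b hab
  exact Subtype.ext (by simpa using congrArg Subtype.val hab)

/-- The master CLP decomposition. -/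
lemma master (q : ℕ) (hq : 2 ≤ q) (hF : Fintype.card F = q) (n : ℕ) :
    ∃ (A B C : Finset (Fin n → ℕ))
      (P Q R : (Fin n → ℕ) → (Fin n → F) → (Fin n → F) → F),
      A.card ≤ mCount q n (((q : ℝ) - 1) * n / 3) ∧
      B.card ≤ mCount q n (((q : ℝ) - 1) * n / 3) ∧
      C.card ≤ mCount q n (((q : ℝ) - 1) * n / 3) ∧
      ∀ x y w : Fin n → F, dd x y w =
        (∑ a ∈ A, (∏ i, x i ^ a i) * P a y w) +
        (∑ b ∈ B, (∏ i, y i ^ b i) * Q b x w) +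
        (∑ c ∈ C, (∏ i, w i ^ c i) * R c x y) := by
  classical
  obtain ⟨k, ex, e, hb, hi⟩ := repB_dd (n := n) hq hF
  set d3 : ℝ := ((q : ℝ) - 1) * n / 3 with hd3
  set Dx : Fin k → ℕ := fun j => ∑ i, (ex j).1 i with hDx
  set Dy : Fin k → ℕ := fun j => ∑ i, (ex j).2.1 i with hDy
  set Dz : Fin k → ℕ := fun j => ∑ i, (ex j).2.2 i with hDz
  have htot : ∀ j, ((Dx j : ℝ) + Dy j + Dz j) ≤ ((q : ℝ) - 1) * n := by
    intro j
    have hnat : Dx j + Dy j + Dz j ≤ (q - 1) * n := by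
      rw [hDx, hDy, hDz]
      calc (∑ i, (ex j).1 i) + (∑ i, (ex j).2.1 i) + (∑ i, (ex j).2.2 i)
          = ∑ i, ((ex j).1 i + (ex j).2.1 i + (ex j).2.2 i) := by
            rw [Finset.sum_add_distrib, Finset.sum_add_distrib]
        _ ≤ ∑ _i : Fin n, (q - 1) := Finset.sum_le_sum (fun i _ => hb j i)
        _ = (q - 1) * n := by simp [mul_comm]
    have hcast : ((q - 1 : ℕ) : ℝ) = (q : ℝ) - 1 := by
      have : (1 : ℕ) ≤ q := by omega
      push_cast [Nat.cast_sub this]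
      ring
    calc ((Dx j : ℝ) + Dy j + Dz j) = ((Dx j + Dy j + Dz j : ℕ) : ℝ) := by push_cast; ring
      _ ≤ (((q - 1) * n : ℕ) : ℝ) := by exact_mod_cast hnat
      _ = ((q : ℝ) - 1) * n := by push_cast [hcast]; ring
  set c1 : Fin k → Prop := fun j => (Dx j : ℝ) ≤ d3 with hc1
  set c2 : Fin k → Prop := fun j => ¬ c1 j ∧ (Dy j : ℝ) ≤ d3 with hc2
  set s1 : Finset (Fin k) := Finset.univ.filter c1 with hs1
  set s2 : Finset (Fin k) := Finset.univ.filter c2 with hs2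
  set s3 : Finset (Fin k) := Finset.univ.filter (fun j => ¬ c1 j ∧ ¬ c2 j) with hs3
  have hc3 : ∀ j ∈ s3, (Dz j : ℝ) ≤ d3 := by
    intro j hj
    rw [hs3, Finset.mem_filter] at hj
    obtain ⟨-, hn1, hn2⟩ := hj
    by_contra hzc
    push_neg at hzc
    apply hn2
    refine ⟨hn1, ?_⟩
    have h1 : ¬ ((Dx j : ℝ) ≤ d3) := hn1
    push_neg at h1
    have h2 := htot j
    have h3 : ((q : ℝ) - 1) * n = 3 * d3 := by rw [hd3]; ring
    show (Dy j : ℝ) ≤ d3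
    linarith
  refine ⟨s1.image (fun j => (ex j).1), s2.image (fun j => (ex j).2.1),
      s3.image (fun j => (ex j).2.2),
      fun a y w => ∑ j ∈ s1.filter (fun j => (ex j).1 = a),
        e j * ((∏ i, y i ^ (ex j).2.1 i) * (∏ i, w i ^ (ex j).2.2 i)),
      fun b x w => ∑ j ∈ s2.filter (fun j => (ex j).2.1 = b),
        e j * ((∏ i, x i ^ (ex j).1 i) * (∏ i, w i ^ (ex j).2.2 i)),
      fun c x y => ∑ j ∈ s3.filter (fun j => (ex j).2.2 = c),
        e j * ((∏ i, x i ^ (ex j).1 i) * (∏ i, y i ^ (ex j).2.1 i)),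
      ?_, ?_, ?_, ?_⟩
  · refine card_le_mCount q n (by omega) d3 _ ?_
    intro a ha
    obtain ⟨j, hj, rfl⟩ := Finset.mem_image.mp ha
    refine ⟨fun i => ?_, ?_⟩
    · have h := hb j i
      have h2 : (fun _ : Fin n => q - 1) i = q - 1 := rfl
      rw [h2] at h
      omega
    · rw [hs1, Finset.mem_filter] at hj
      exact hj.2
  · refine card_le_mCount q n (by omega) d3 _ ?_
    intro b hbm
    obtain ⟨j, hj, rfl⟩ := Finset.mem_image.mp hbm
    refine ⟨fun i => ?_, ?_⟩
    · have h := hb j i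
      have h2 : (fun _ : Fin n => q - 1) i = q - 1 := rfl
      rw [h2] at h
      omega
    · rw [hs2, Finset.mem_filter] at hj
      exact hj.2.2
  · refine card_le_mCount q n (by omega) d3 _ ?_
    intro c hcm
    obtain ⟨j, hj, rfl⟩ := Finset.mem_image.mp hcm
    refine ⟨fun i => ?_, hc3 j hj⟩
    have h := hb j i
    have h2 : (fun _ : Fin n => q - 1) i = q - 1 := rfl
    rw [h2] at h
    omega
  · intro x y w
    rw [hi x y w]
    have hsplit : (Finset.univ : Finset (Fin k)) = s1 ∪ s2 ∪ s3 := by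
      rw [hs1, hs2, hs3]
      ext j
      simp only [Finset.mem_union, Finset.mem_filter, Finset.mem_univ, true_and]
      tauto
    have hd12 : Disjoint s1 s2 := by
      rw [hs1, hs2, Finset.disjoint_filter]
      intro j _ hj
      rw [hc2]; tauto
    have hd123 : Disjoint (s1 ∪ s2) s3 := by
      rw [Finset.disjoint_union_left]
      constructor
      · rw [hs1, hs3, Finset.disjoint_filter]
        intro j _ hj; tauto
      · rw [hs2, hs3, Finset.disjoint_filter]
        intro j _ hj; tauto
    rw [hsplit, Finset.sum_union hd123, Finset.sum_union hd12]
    have hg1 : ∑ j ∈ s1, e j * Mono (ex j) x y w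
        = ∑ a ∈ s1.image (fun j => (ex j).1), (∏ i, x i ^ a i) *
            (∑ j ∈ s1.filter (fun j => (ex j).1 = a),
              e j * ((∏ i, y i ^ (ex j).2.1 i) * (∏ i, w i ^ (ex j).2.2 i))) := by
      rw [← Finset.sum_fiberwise_of_maps_to (g := fun j => (ex j).1)
        (fun j hj => Finset.mem_image_of_mem (fun j => (ex j).1) hj)
        (fun j => e j * Mono (ex j) x y w)]
      refine Finset.sum_congr rfl fun a _ => ?_
      rw [Finset.mul_sum]
      refine Finset.sum_congr rfl fun j hj => ?_
      rw [Finset.mem_filter] at hj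
      rw [← hj.2]
      unfold Mono
      ring
    have hg2 : ∑ j ∈ s2, e j * Mono (ex j) x y w
        = ∑ b ∈ s2.image (fun j => (ex j).2.1), (∏ i, y i ^ b i) *
            (∑ j ∈ s2.filter (fun j => (ex j).2.1 = b),
              e j * ((∏ i, x i ^ (ex j).1 i) * (∏ i, w i ^ (ex j).2.2 i))) := by
      rw [← Finset.sum_fiberwise_of_maps_to (g := fun j => (ex j).2.1)
        (fun j hj => Finset.mem_image_of_mem (fun j => (ex j).2.1) hj)
        (fun j => e j * Mono (ex j) x y w)]
      refine Finset.sum_congr rfl fun b _ => ?_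
      rw [Finset.mul_sum]
      refine Finset.sum_congr rfl fun j hj => ?_
      rw [Finset.mem_filter] at hj
      rw [← hj.2]
      unfold Mono
      ring
    have hg3 : ∑ j ∈ s3, e j * Mono (ex j) x y w
        = ∑ c ∈ s3.image (fun j => (ex j).2.2), (∏ i, w i ^ c i) *
            (∑ j ∈ s3.filter (fun j => (ex j).2.2 = c),
              e j * ((∏ i, x i ^ (ex j).1 i) * (∏ i, y i ^ (ex j).2.1 i))) := by
      rw [← Finset.sum_fiberwise_of_maps_to (g := fun j => (ex j).2.2)
        (fun j hj => Finset.mem_image_of_mem (fun j => (ex j).2.2) hj)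
        (fun j => e j * Mono (ex j) x y w)]
      refine Finset.sum_congr rfl fun c _ => ?_
      rw [Finset.mul_sum]
      refine Finset.sum_congr rfl fun j hj => ?_
      rw [Finset.mem_filter] at hj
      rw [← hj.2]
      unfold Mono
      ring
    rw [hg1, hg2, hg3]

/-! ### The greedy covering construction -/

abbrev Rec (n : ℕ) (F : Type*) := (Fin n → F) × (Fin n → F) × ((Fin n → ℕ) → F)

def vA (E : Finset (Fin n → ℕ)) (x : Fin n → F) : ↥E → F :=
  fun a => ∏ i, x i ^ (a : Fin n → ℕ) i

noncomputable def SFin (xl : List (Fin n → F)) (rl : List (Rec n F)) : Finset (Fin n → F) :=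
  xl.toFinset ∪ (rl.map Prod.fst).toFinset

def Uncov (S T : Set (Fin n → F)) (xl yl : List (Fin n → F)) (rl : List (Rec n F)) :
    Set (Fin n → F) :=
  (S + T) \ ((↑(SFin xl rl) + T) ∪ (S + ↑(yl.toFinset)))

def Cert (C : Finset (Fin n → ℕ)) (T S'' : Set (Fin n → F)) (r : Rec n F) : Prop :=
  ∃ (kx ky : ℕ) (xs : Fin kx → (Fin n → F)) (lam : Fin kx → F)
    (ys : Fin ky → (Fin n → F)) (mu : Fin ky → F) (y : Fin n → F),
    (∀ i, xs i ∈ S'') ∧ (∀ j, ys j ∈ T) ∧ y ∈ T ∧ r.1 ∈ S'' ∧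
    ∀ w, (∑ c ∈ C, (∏ i, w i ^ c i) * r.2.2 c) =
      dd r.1 y w - (∑ i, lam i * dd (xs i) y w) - (∑ j, mu j * dd r.1 (ys j) w)
        + ∑ i, ∑ j, lam i * mu j * dd (xs i) (ys j) w

lemma dd_of_eq {x y w : Fin n → F} (h : x + y = w) : dd x y w = 1 := if_pos h

lemma dd_of_notmem {U V : Set (Fin n → F)} {x y w : Fin n → F}
    (hx : x ∈ U) (hy : y ∈ V) (hw : w ∉ U + V) : dd x y w = 0 := by
  unfold dd
  rw [if_neg]
  intro h
  exact hw (h ▸ Set.add_mem_add hx hy)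

lemma cert_mono {C : Finset (Fin n → ℕ)} {T S'' S''' : Set (Fin n → F)} {r : Rec n F}
    (hss : S'' ⊆ S''') (h : Cert C T S'' r) : Cert C T S''' r := by
  obtain ⟨kx, ky, xs, lam, ys, mu, y, h1, h2, h3, h4, h5⟩ := h
  exact ⟨kx, ky, xs, lam, ys, mu, y, fun i => hss (h1 i), h2, h3, hss h4, h5⟩

lemma cert_eval_zero {C : Finset (Fin n → ℕ)} {T S'' : Set (Fin n → F)} {r : Rec n F}
    (hr : Cert C T S'' r) {z : Fin n → F} (hz : z ∉ S'' + T) :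
    ∑ c ∈ C, (∏ i, z i ^ c i) * r.2.2 c = 0 := by
  obtain ⟨kx, ky, xs, lam, ys, mu, y, h1, h2, h3, h4, h5⟩ := hr
  rw [h5 z]
  rw [dd_of_notmem h4 h3 hz]
  rw [Finset.sum_eq_zero (fun i _ => by rw [dd_of_notmem (h1 i) h3 hz, mul_zero])]
  rw [Finset.sum_eq_zero (fun j _ => by rw [dd_of_notmem h4 (h2 j) hz, mul_zero])]
  rw [Finset.sum_eq_zero (fun i _ => Finset.sum_eq_zero
    (fun j _ => by rw [dd_of_notmem (h1 i) (h2 j) hz, mul_zero]))]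
  ring

lemma span_pointwise {m : ℕ} (E : Finset (Fin n → ℕ)) (v : Fin n → F)
    (vl : Fin m → Fin n → F) (co : Fin m → F)
    (hco : ∑ j, co j • vA E (vl j) = vA E v) :
    ∀ e ∈ E, (∏ i, v i ^ e i) = ∑ j, co j * ∏ i, (vl j) i ^ e i := by
  intro e he
  have := congrFun hco ⟨e, he⟩
  simpa [vA, Finset.sum_apply, Pi.smul_apply, smul_eq_mul] using this.symm

lemma span_eval {m : ℕ} (E : Finset (Fin n → ℕ)) (v : Fin n → F)
    (vl : Fin m → Fin n → F) (co : Fin m → F)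
    (hco : ∀ e ∈ E, (∏ i, v i ^ e i) = ∑ j, co j * ∏ i, (vl j) i ^ e i)
    (QQ : (Fin n → ℕ) → F) :
    ∑ e ∈ E, (∏ i, v i ^ e i) * QQ e
      = ∑ j, co j * ∑ e ∈ E, (∏ i, (vl j) i ^ e i) * QQ e := by
  calc ∑ e ∈ E, (∏ i, v i ^ e i) * QQ e
      = ∑ e ∈ E, ∑ j, co j * (∏ i, (vl j) i ^ e i) * QQ e := by
        refine Finset.sum_congr rfl fun e he => ?_
        rw [hco e he, Finset.sum_mul]
    _ = ∑ j, ∑ e ∈ E, co j * (∏ i, (vl j) i ^ e i) * QQ e := Finset.sum_comm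
    _ = ∑ j, co j * ∑ e ∈ E, (∏ i, (vl j) i ^ e i) * QQ e := by
        refine Finset.sum_congr rfl fun j _ => ?_
        rw [Finset.mul_sum]
        exact Finset.sum_congr rfl fun e _ => by ring

lemma sum_mul_dist {α : Type*} (E : Finset α) {m : ℕ} (f g : α → F) (h : α → Fin m → F)
    (co : Fin m → F) :
    (∑ e ∈ E, f e * g e) - (∑ j, co j * ∑ e ∈ E, f e * h e j)
      = ∑ e ∈ E, f e * (g e - ∑ j, co j * h e j) := by
  have h1 : ∀ j, co j * ∑ e ∈ E, f e * h e j = ∑ e ∈ E, f e * (co j * h e j) := by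
    intro j
    rw [Finset.mul_sum]
    exact Finset.sum_congr rfl fun e _ => by ring
  calc (∑ e ∈ E, f e * g e) - (∑ j, co j * ∑ e ∈ E, f e * h e j)
      = (∑ e ∈ E, f e * g e) - ∑ j, ∑ e ∈ E, f e * (co j * h e j) := by
        rw [Finset.sum_congr rfl fun j _ => h1 j]
    _ = (∑ e ∈ E, f e * g e) - ∑ e ∈ E, ∑ j, f e * (co j * h e j) := by
        rw [Finset.sum_comm (s := Finset.univ) (t := E)]
    _ = ∑ e ∈ E, (f e * g e - ∑ j, f e * (co j * h e j)) := by
        rw [Finset.sum_sub_distrib]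
    _ = ∑ e ∈ E, f e * (g e - ∑ j, co j * h e j) := by
        refine Finset.sum_congr rfl fun e _ => ?_
        rw [mul_sub, Finset.mul_sum]

lemma li_of_pairing {κ : Type*} [Fintype κ] {m : ℕ} (v rho : Fin m → (κ → F))
    (hd : ∀ j, ∑ c, v j c * rho j c = 1)
    (ho : ∀ j k : Fin m, j < k → ∑ c, v j c * rho k c = 0) :
    LinearIndependent F v := by
  rw [Fintype.linearIndependent_iff]
  intro g hg
  have key : ∀ (K : ℕ) (j : Fin m), m ≤ (j : ℕ) + K → g j = 0 := by
    intro K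
    induction K with
    | zero =>
      intro j hj
      exact absurd hj (by have := j.isLt; omega)
    | succ K ih =>
      intro j hj
      have hgt : ∀ k : Fin m, (j : ℕ) < (k : ℕ) → g k = 0 := fun k hk => ih k (by omega)
      have h0 : ∑ c, (∑ jj, g jj • v jj) c * rho j c = 0 := by rw [hg]; simp
      have h1 : ∑ jj, g jj * ∑ c, v jj c * rho j c = 0 := by
        rw [← h0]
        simp only [Finset.sum_apply, Pi.smul_apply, smul_eq_mul, Finset.sum_mul]
        rw [Finset.sum_comm]
        refine Finset.sum_congr rfl fun jj _ => ?_
        rw [Finset.mul_sum]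
        exact Finset.sum_congr rfl fun c _ => by ring
      have h2 : ∑ jj, g jj * ∑ c, v jj c * rho j c = g j := by
        rw [Finset.sum_eq_single j]
        · rw [hd j, mul_one]
        · intro jj _ hne
          rcases hne.lt_or_gt with hlt | hgtc
          · rw [ho jj j hlt, mul_zero]
          · rw [hgt jj (by exact hgtc), zero_mul]
        · intro hnm; exact absurd (Finset.mem_univ j) hnm
      rw [h1] at h2
      exact h2.symm
  intro j
  exact key m j (by omega)

lemma len_le_of_li {E : Finset (Fin n → ℕ)} {m : ℕ} {v : Fin m → (↥E → F)}
    (h : LinearIndependent F v) : m ≤ E.card := by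
  have := h.fintype_card_le_finrank
  rwa [Fintype.card_fin, Module.finrank_pi, Fintype.card_coe] at this

structure Inv (A B C : Finset (Fin n → ℕ)) (S T : Set (Fin n → F))
    (xl yl : List (Fin n → F)) (rl : List (Rec n F)) : Prop where
  hxlS : ∀ x ∈ xl, x ∈ S
  hrlS : ∀ r ∈ rl, r.1 ∈ S
  hylT : ∀ y ∈ yl, y ∈ T
  hindA : LinearIndependent F (fun j : Fin xl.length => vA A (xl.get j))
  hindB : LinearIndependent F (fun j : Fin yl.length => vA B (yl.get j))
  hcert : ∀ r ∈ rl, Cert C T (↑(SFin xl rl)) r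
  hpair : rl.Pairwise (fun rN rO => (∑ c ∈ C, (∏ i, rN.2.1 i ^ c i) * rO.2.2 c) = 0)
  hdiag : ∀ r ∈ rl, (∑ c ∈ C, (∏ i, r.2.1 i ^ c i) * r.2.2 c) = 1

lemma mem_SFin_left {xl : List (Fin n → F)} {rl : List (Rec n F)} {x : Fin n → F}
    (h : x ∈ xl) : x ∈ SFin xl rl := by
  rw [SFin, Finset.mem_union, List.mem_toFinset]
  exact Or.inl h

lemma mem_SFin_right {xl : List (Fin n → F)} {rl : List (Rec n F)} {r : Rec n F}
    (h : r ∈ rl) : r.1 ∈ SFin xl rl := by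
  rw [SFin, Finset.mem_union, List.mem_toFinset, List.mem_toFinset]
  exact Or.inr (List.mem_map.mpr ⟨r, h, rfl⟩)

lemma SFin_subset {S T : Set (Fin n → F)} {A B C : Finset (Fin n → ℕ)}
    {xl yl : List (Fin n → F)} {rl : List (Rec n F)}
    (inv : Inv A B C S T xl yl rl) : (↑(SFin xl rl) : Set (Fin n → F)) ⊆ S := by
  intro u hu
  simp only [Finset.coe_union, Set.mem_union, Finset.mem_coe, List.mem_toFinset, SFin] at hu
  rcases hu with h | h
  · exact inv.hxlS u h
  · obtain ⟨r, hr, rfl⟩ := List.mem_map.mp h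
    exact inv.hrlS r hr

lemma SFin_cons_x {xl : List (Fin n → F)} {rl : List (Rec n F)} {x : Fin n → F} :
    SFin xl rl ⊆ SFin (x :: xl) rl := by
  intro u hu
  rw [SFin, Finset.mem_union, List.mem_toFinset] at hu ⊢
  rcases hu with h | h
  · exact Or.inl (List.mem_cons_of_mem x h)
  · exact Or.inr h

lemma SFin_cons_r {xl : List (Fin n → F)} {rl : List (Rec n F)} {r : Rec n F} :
    SFin xl rl ⊆ SFin xl (r :: rl) := by
  intro u hu
  rw [SFin, Finset.mem_union, List.mem_toFinset] at hu ⊢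
  rcases hu with h | h
  · exact Or.inl h
  · refine Or.inr ?_
    rw [List.map_cons]
    rw [List.mem_toFinset] at h ⊢
    exact List.mem_cons_of_mem _ h

lemma grow (A B C : Finset (Fin n → ℕ))
    (P Q R : (Fin n → ℕ) → (Fin n → F) → (Fin n → F) → F)
    (S T : Set (Fin n → F))
    (hid : ∀ x y w : Fin n → F, dd x y w =
        (∑ a ∈ A, (∏ i, x i ^ a i) * P a y w) +
        (∑ b ∈ B, (∏ i, y i ^ b i) * Q b x w) +
        (∑ c ∈ C, (∏ i, w i ^ c i) * R c x y)) :
    ∀ (N : ℕ) (xl yl : List (Fin n → F)) (rl : List (Rec n F)),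
      Inv A B C S T xl yl rl → Nat.card (Uncov S T xl yl rl) ≤ N →
      ∃ xl' yl' rl', Inv A B C S T xl' yl' rl' ∧ Uncov S T xl' yl' rl' = ∅ := by
  intro N
  induction N with
  | zero =>
    intro xl yl rl inv hcard
    refine ⟨xl, yl, rl, inv, ?_⟩
    have hfin : (Uncov S T xl yl rl).Finite := Set.toFinite _
    have h0 : (Uncov S T xl yl rl).ncard = 0 := by
      have := Nat.card_coe_set_eq (Uncov S T xl yl rl)
      omega
    rwa [Set.ncard_eq_zero hfin] at h0
  | succ N ih =>
    intro xl yl rl inv hcard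
    by_cases hemp : Uncov S T xl yl rl = ∅
    · exact ⟨xl, yl, rl, inv, hemp⟩
    obtain ⟨z, hz⟩ := Set.nonempty_iff_ne_empty.mpr hemp
    have hzmem := hz
    rw [Uncov, Set.mem_diff, Set.mem_union] at hzmem
    push_neg at hzmem
    obtain ⟨hzST, hz1, hz2⟩ := hzmem
    obtain ⟨x, hxS, y, hyT, hxy⟩ := Set.mem_add.mp hzST
    by_cases hyB : vA B y ∈ Submodule.span F
        (Set.range (fun j : Fin yl.length => vA B (yl.get j)))
    · by_cases hxA : vA A x ∈ Submodule.span F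
          (Set.range (fun j : Fin xl.length => vA A (xl.get j)))
      · -- X2 step : build a new record
        obtain ⟨mu, hmu⟩ := (Submodule.mem_span_range_iff_exists_fun F).mp hyB
        obtain ⟨lam, hlam⟩ := (Submodule.mem_span_range_iff_exists_fun F).mp hxA
        have hmup := span_pointwise B y (fun j => yl.get j) mu hmu
        have hlamp := span_pointwise A x (fun jj => xl.get jj) lam hlam
        have hV : ∀ x' w : Fin n → F,
            dd x' y w - ∑ j, mu j * dd x' (yl.get j) w
              = (∑ a ∈ A, (∏ i, x' i ^ a i) * (P a y w - ∑ j, mu j * P a (yl.get j) w))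
                + (∑ c ∈ C, (∏ i, w i ^ c i)
                    * (R c x' y - ∑ j, mu j * R c x' (yl.get j))) := by
          intro x' w
          have h1 : ∑ j, mu j * dd x' (yl.get j) w
              = (∑ j, mu j * ∑ a ∈ A, (∏ i, x' i ^ a i) * P a (yl.get j) w)
                + (∑ j, mu j * ∑ b ∈ B, (∏ i, (yl.get j) i ^ b i) * Q b x' w)
                + (∑ j, mu j * ∑ c ∈ C, (∏ i, w i ^ c i) * R c x' (yl.get j)) := by
            rw [← Finset.sum_add_distrib, ← Finset.sum_add_distrib]
            refine Finset.sum_congr rfl fun j _ => ?_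
            rw [hid x' (yl.get j) w]
            ring
          have h2 : ∑ b ∈ B, (∏ i, y i ^ b i) * Q b x' w
              = ∑ j, mu j * ∑ b ∈ B, (∏ i, (yl.get j) i ^ b i) * Q b x' w :=
            span_eval B y (fun j => yl.get j) mu hmup (fun b => Q b x' w)
          have h3 := sum_mul_dist A (fun a => ∏ i, x' i ^ a i) (fun a => P a y w)
            (fun a j => P a (yl.get j) w) mu
          have h4 := sum_mul_dist C (fun c => ∏ i, w i ^ c i) (fun c => R c x' y)
            (fun c j => R c x' (yl.get j)) mu
          rw [hid x' y w, h1]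
          linear_combination h3 + h4 + h2
        have hrec : ∃ rho : (Fin n → ℕ) → F, ∀ w : Fin n → F,
            ∑ c ∈ C, (∏ i, w i ^ c i) * rho c
              = dd x y w - (∑ jj, lam jj * dd (xl.get jj) y w)
                - (∑ j, mu j * dd x (yl.get j) w)
                + ∑ jj, ∑ j, lam jj * mu j * dd (xl.get jj) (yl.get j) w := by
          refine ⟨fun c => (R c x y - ∑ j, mu j * R c x (yl.get j))
              - ∑ jj, lam jj * (R c (xl.get jj) y
                - ∑ j, mu j * R c (xl.get jj) (yl.get j)), fun w => ?_⟩
          have hL := (sum_mul_dist C (fun c => ∏ i, w i ^ c i)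
              (fun c => R c x y - ∑ j, mu j * R c x (yl.get j))
              (fun c jj => R c (xl.get jj) y
                - ∑ j, mu j * R c (xl.get jj) (yl.get j)) lam).symm
          have hVx := hV x w
          have hXP : ∑ a ∈ A, (∏ i, x i ^ a i) * (P a y w - ∑ j, mu j * P a (yl.get j) w)
              = ∑ jj, lam jj * ∑ a ∈ A, (∏ i, (xl.get jj) i ^ a i)
                  * (P a y w - ∑ j, mu j * P a (yl.get j) w) :=
            span_eval A x (fun jj => xl.get jj) lam hlamp
              (fun a => P a y w - ∑ j, mu j * P a (yl.get j) w)
          have hSS : ∑ jj, lam jj * (∑ c ∈ C, (∏ i, w i ^ c i)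
                * (R c (xl.get jj) y - ∑ j, mu j * R c (xl.get jj) (yl.get j)))
              = (∑ jj, lam jj * (dd (xl.get jj) y w
                    - ∑ j, mu j * dd (xl.get jj) (yl.get j) w))
                - ∑ jj, lam jj * (∑ a ∈ A, (∏ i, (xl.get jj) i ^ a i)
                    * (P a y w - ∑ j, mu j * P a (yl.get j) w)) := by
            rw [← Finset.sum_sub_distrib]
            refine Finset.sum_congr rfl fun jj _ => ?_
            linear_combination (- lam jj) * hV (xl.get jj) w
          have hE : ∑ jj, lam jj * (dd (xl.get jj) y w
                - ∑ j, mu j * dd (xl.get jj) (yl.get j) w)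
              = (∑ jj, lam jj * dd (xl.get jj) y w)
                - ∑ jj, ∑ j, lam jj * mu j * dd (xl.get jj) (yl.get j) w := by
            rw [← Finset.sum_sub_distrib]
            refine Finset.sum_congr rfl fun jj _ => ?_
            rw [mul_sub, Finset.mul_sum]
            congr 1
            exact Finset.sum_congr rfl fun j _ => by ring
          rw [hL, hSS, hE]
          linear_combination - hVx - hXP
        obtain ⟨rho, hK1⟩ := hrec
        refine ih xl yl ((x, z, rho) :: rl) ?_ ?_
        · refine ⟨inv.hxlS, ?_, inv.hylT, inv.hindA, inv.hindB, ?_, ?_, ?_⟩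
          · intro r hr
            rcases List.mem_cons.mp hr with rfl | hr'
            · exact hxS
            · exact inv.hrlS r hr'
          · intro r hr
            rcases List.mem_cons.mp hr with rfl | hr'
            · refine ⟨xl.length, yl.length, fun jj => xl.get jj, lam,
                fun j => yl.get j, mu, y, ?_, ?_, hyT, ?_, ?_⟩
              · intro jj
                exact Finset.mem_coe.mpr (mem_SFin_left (List.get_mem xl jj))
              · intro j
                exact inv.hylT _ (List.get_mem yl j)
              · exact Finset.mem_coe.mpr (mem_SFin_right (List.mem_cons_self))
              · exact hK1
            · exact cert_mono (Finset.coe_subset.mpr SFin_cons_r) (inv.hcert r hr')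
          · rw [List.pairwise_cons]
            refine ⟨?_, inv.hpair⟩
            intro rO hrO
            exact cert_eval_zero (inv.hcert rO hrO) hz1
          · intro r hr
            rcases List.mem_cons.mp hr with rfl | hr'
            · show ∑ c ∈ C, (∏ i, z i ^ c i) * rho c = 1
              rw [hK1 z, dd_of_eq hxy]
              have e1 : ∀ jj, dd (xl.get jj) y z = 0 := fun jj =>
                dd_of_notmem (Finset.mem_coe.mpr (mem_SFin_left (List.get_mem xl jj))) hyT hz1
              have e2 : ∀ j, dd x (yl.get j) z = 0 := fun j =>
                dd_of_notmem hxS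
                  (Finset.mem_coe.mpr (List.mem_toFinset.mpr (List.get_mem yl j))) hz2
              have e3 : ∀ jj j, dd (xl.get jj) (yl.get j) z = 0 := fun jj j =>
                dd_of_notmem (Finset.mem_coe.mpr (mem_SFin_left (List.get_mem xl jj)))
                  (inv.hylT _ (List.get_mem yl j)) hz1
              rw [Finset.sum_eq_zero (fun jj _ => by rw [e1 jj, mul_zero]),
                Finset.sum_eq_zero (fun j _ => by rw [e2 j, mul_zero]),
                Finset.sum_eq_zero (fun jj _ => Finset.sum_eq_zero
                  (fun j _ => by rw [e3 jj j, mul_zero]))]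
              ring
            · exact inv.hdiag r hr'
        · -- cardinality decrease
          have hsub : Uncov S T xl yl ((x, z, rho) :: rl) ⊆ Uncov S T xl yl rl := by
            intro u hu
            rw [Uncov, Set.mem_diff] at hu ⊢
            refine ⟨hu.1, fun hmem => hu.2 ?_⟩
            rw [Set.mem_union] at hmem ⊢
            rcases hmem with h | h
            · obtain ⟨a, ha, b, hb, hab⟩ := Set.mem_add.mp h
              exact Or.inl (Set.mem_add.mpr
                ⟨a, Finset.mem_coe.mpr (SFin_cons_r (Finset.mem_coe.mp ha)), b, hb, hab⟩)
            · exact Or.inr h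
          have hznew : z ∉ Uncov S T xl yl ((x, z, rho) :: rl) := by
            intro hcon
            rw [Uncov, Set.mem_diff] at hcon
            refine hcon.2 (Or.inl (Set.mem_add.mpr ⟨x, ?_, y, hyT, hxy⟩))
            exact Finset.mem_coe.mpr (mem_SFin_right (List.mem_cons_self))
          have hssub := (Set.ssubset_iff_of_subset hsub).mpr ⟨z, hz, hznew⟩
          have hlt := Set.ncard_lt_ncard hssub (Set.toFinite _)
          have e1 := Nat.card_coe_set_eq (Uncov S T xl yl ((x, z, rho) :: rl))
          have e2 := Nat.card_coe_set_eq (Uncov S T xl yl rl)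
          omega
      · -- X1 step : add x to xl
        refine ih (x :: xl) yl rl ?_ ?_
        · refine ⟨?_, inv.hrlS, inv.hylT, ?_, inv.hindB, ?_, inv.hpair, inv.hdiag⟩
          · intro u hu
            rcases List.mem_cons.mp hu with rfl | hu'
            · exact hxS
            · exact inv.hxlS u hu'
          · have hfam : (fun j : Fin ((x :: xl).length) => vA A ((x :: xl).get j))
                = Fin.cons (vA A x) (fun j : Fin xl.length => vA A (xl.get j)) := by
              funext j
              refine Fin.cases ?_ ?_ j
              · rfl
              · intro j'; rfl
            rw [hfam]
            exact linearIndependent_fin_cons.mpr ⟨inv.hindA, hxA⟩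
          · intro r hr
            exact cert_mono (Finset.coe_subset.mpr SFin_cons_x) (inv.hcert r hr)
        · have hsub : Uncov S T (x :: xl) yl rl ⊆ Uncov S T xl yl rl := by
            intro u hu
            rw [Uncov, Set.mem_diff] at hu ⊢
            refine ⟨hu.1, fun hmem => hu.2 ?_⟩
            rw [Set.mem_union] at hmem ⊢
            rcases hmem with h | h
            · obtain ⟨a, ha, b, hb, hab⟩ := Set.mem_add.mp h
              exact Or.inl (Set.mem_add.mpr
                ⟨a, Finset.mem_coe.mpr (SFin_cons_x (Finset.mem_coe.mp ha)), b, hb, hab⟩)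
            · exact Or.inr h
          have hznew : z ∉ Uncov S T (x :: xl) yl rl := by
            intro hcon
            rw [Uncov, Set.mem_diff] at hcon
            refine hcon.2 (Or.inl (Set.mem_add.mpr ⟨x, ?_, y, hyT, hxy⟩))
            exact Finset.mem_coe.mpr (mem_SFin_left (List.mem_cons_self))
          have hssub := (Set.ssubset_iff_of_subset hsub).mpr ⟨z, hz, hznew⟩
          have hlt := Set.ncard_lt_ncard hssub (Set.toFinite _)
          have e1 := Nat.card_coe_set_eq (Uncov S T (x :: xl) yl rl)
          have e2 := Nat.card_coe_set_eq (Uncov S T xl yl rl)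
          omega
    · -- Y step : add y to yl
      refine ih xl (y :: yl) rl ?_ ?_
      · refine ⟨inv.hxlS, inv.hrlS, ?_, inv.hindA, ?_, inv.hcert, inv.hpair, inv.hdiag⟩
        · intro u hu
          rcases List.mem_cons.mp hu with rfl | hu'
          · exact hyT
          · exact inv.hylT u hu'
        · have hfam : (fun j : Fin ((y :: yl).length) => vA B ((y :: yl).get j))
              = Fin.cons (vA B y) (fun j : Fin yl.length => vA B (yl.get j)) := by
            funext j
            refine Fin.cases ?_ ?_ j
            · rfl
            · intro j'; rfl
          rw [hfam]
          exact linearIndependent_fin_cons.mpr ⟨inv.hindB, hyB⟩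
      · have hsub : Uncov S T xl (y :: yl) rl ⊆ Uncov S T xl yl rl := by
          intro u hu
          rw [Uncov, Set.mem_diff] at hu ⊢
          refine ⟨hu.1, fun hmem => hu.2 ?_⟩
          rw [Set.mem_union] at hmem ⊢
          rcases hmem with h | h
          · exact Or.inl h
          · obtain ⟨a, ha, b, hb, hab⟩ := Set.mem_add.mp h
            refine Or.inr (Set.mem_add.mpr ⟨a, ha, b, ?_, hab⟩)
            rw [Finset.mem_coe, List.mem_toFinset] at hb ⊢
            exact List.mem_cons_of_mem y hb
        have hznew : z ∉ Uncov S T xl (y :: yl) rl := by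
          intro hcon
          rw [Uncov, Set.mem_diff] at hcon
          refine hcon.2 (Or.inr (Set.mem_add.mpr ⟨x, hxS, y, ?_, hxy⟩))
          rw [Finset.mem_coe, List.mem_toFinset]
          exact List.mem_cons_self
        have hssub := (Set.ssubset_iff_of_subset hsub).mpr ⟨z, hz, hznew⟩
        have hlt := Set.ncard_lt_ncard hssub (Set.toFinite _)
        have e1 := Nat.card_coe_set_eq (Uncov S T xl (y :: yl) rl)
        have e2 := Nat.card_coe_set_eq (Uncov S T xl yl rl)
        omega

end EllSum

theorem sumset_union_of_sumsets_of_subsets (q n : ℕ) (hq : IsPrimePow q) (hn : 0 < n)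
    (F : Type*) [Field F] [Fintype F] (hF : Fintype.card F = q)
    (S T : Set (Fin n → F)) :
    ∃ S' T' : Set (Fin n → F), S' ⊆ S ∧ T' ⊆ T ∧
      Nat.card S' + Nat.card T' ≤ Mbound q n ∧
      (S' + T) ∪ (S + T') = S + T := by
  classical
  have hq2 : 2 ≤ q := hq.two_le
  obtain ⟨A, B, C, P, Q, R, hcA, hcB, hcC, hid⟩ := EllSum.master q hq2 hF n
  have inv0 : EllSum.Inv A B C S T [] [] [] := by
    refine ⟨by simp, by simp, by simp, ?_, ?_, by simp, List.Pairwise.nil, by simp⟩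
    · haveI : IsEmpty (Fin (List.length ([] : List (Fin n → F)))) :=
        ⟨fun j => absurd j.2 (by simp)⟩
      exact linearIndependent_empty_type
    · haveI : IsEmpty (Fin (List.length ([] : List (Fin n → F)))) :=
        ⟨fun j => absurd j.2 (by simp)⟩
      exact linearIndependent_empty_type
  obtain ⟨xl, yl, rl, inv, hempty⟩ := EllSum.grow A B C P Q R S T hid
    (Nat.card (EllSum.Uncov S T [] [] [])) [] [] [] inv0 le_rfl
  refine ⟨↑(EllSum.SFin xl rl), ↑(yl.toFinset), EllSum.SFin_subset inv, ?_, ?_, ?_⟩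
  · intro u hu
    exact inv.hylT u (List.mem_toFinset.mp (Finset.mem_coe.mp hu))
  · -- cardinality bound
    have c1 : Nat.card ↥(↑(EllSum.SFin xl rl) : Set (Fin n → F))
        = (EllSum.SFin xl rl).card := by
      rw [Nat.card_coe_set_eq, Set.ncard_coe_finset]
    have c2 : Nat.card ↥(↑(yl.toFinset) : Set (Fin n → F)) = yl.toFinset.card := by
      rw [Nat.card_coe_set_eq, Set.ncard_coe_finset]
    have l1 : xl.length ≤ A.card := EllSum.len_le_of_li inv.hindA
    have l2 : yl.length ≤ B.card := EllSum.len_le_of_li inv.hindB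
    have l3 : rl.length ≤ C.card := by
      have hd : ∀ j : Fin rl.length,
          ∑ c : ↥C, EllSum.vA C ((rl.get j).2.1) c * (rl.get j).2.2 ↑c = 1 := by
        intro j
        have h := inv.hdiag (rl.get j) (List.get_mem rl j)
        rw [← Finset.sum_coe_sort C
          (fun c => (∏ i, (rl.get j).2.1 i ^ c i) * (rl.get j).2.2 c)] at h
        exact h
      have ho : ∀ j k : Fin rl.length, j < k →
          ∑ c : ↥C, EllSum.vA C ((rl.get j).2.1) c * (rl.get k).2.2 ↑c = 0 := by
        intro j k hjk
        have h := List.pairwise_iff_get.mp inv.hpair j k hjk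
        rw [← Finset.sum_coe_sort C
          (fun c => (∏ i, (rl.get j).2.1 i ^ c i) * (rl.get k).2.2 c)] at h
        exact h
      exact EllSum.len_le_of_li (EllSum.li_of_pairing _ _ hd ho)
    have hcard3 : (EllSum.SFin xl rl).card ≤ xl.length + rl.length := by
      refine (Finset.card_union_le _ _).trans ?_
      have t1 := xl.toFinset_card_le
      have t2 := (rl.map Prod.fst).toFinset_card_le
      rw [List.length_map] at t2
      omega
    have hTcard : yl.toFinset.card ≤ yl.length := yl.toFinset_card_le
    rw [c1, c2, Mbound]
    omega
  · -- covering identity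
    apply subset_antisymm
    · rintro z (h | h)
      · obtain ⟨a, ha, b, hb, hab⟩ := Set.mem_add.mp h
        exact Set.mem_add.mpr ⟨a, EllSum.SFin_subset inv ha, b, hb, hab⟩
      · obtain ⟨a, ha, b, hb, hab⟩ := Set.mem_add.mp h
        exact Set.mem_add.mpr
          ⟨a, ha, b, inv.hylT b (List.mem_toFinset.mp (Finset.mem_coe.mp hb)), hab⟩
    · intro z hzST
      by_contra hnot
      have hmem : z ∈ EllSum.Uncov S T xl yl rl := by
        rw [EllSum.Uncov, Set.mem_diff]
        exact ⟨hzST, hnot⟩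
      rw [hempty] at hmem
      exact hmem
end

section
/- Let q be a prime power, n a positive integer, d a nonnegative real number, and let S and T be subsets of F_q^n. Then there exist a subset S' of S and a subset T' of T such that |S'| + |T'| ≤ 2·m_{d/2} + q^n − m_d and (S' + T) ∪ (S + T') = S + T. -/
open Pointwise

namespace SumsetAux

attribute [local instance] Classical.propDecidable

/-- exponent vectors with entries `< q` and real total degree `≤ d` -/
noncomputable def expFinset (q n : ℕ) (d : ℝ) : Finset (Fin n → ℕ) :=
  (Fintype.piFinset fun _ : Fin n => Finset.range q).filter
    fun a => ((∑ i, a i : ℕ) : ℝ) ≤ d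

lemma mem_expFinset {q n : ℕ} {d : ℝ} {a : Fin n → ℕ} :
    a ∈ expFinset q n d ↔ (∀ i, a i < q) ∧ ((∑ i, a i : ℕ) : ℝ) ≤ d := by
  simp [expFinset, Fintype.mem_piFinset]

lemma mCount_eq (q n : ℕ) (hq : 0 < q) (d : ℝ) :
    mCount q n d = (expFinset q n d).card := by
  have hset : {a : Fin n → ℕ | (∀ i, a i ≤ q - 1) ∧ ((∑ i, a i : ℕ) : ℝ) ≤ d}
      = ↑(expFinset q n d) := by
    ext a
    simp only [Set.mem_setOf_eq, Finset.coe_filter, expFinset, Set.mem_setOf_eq,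
      Finset.mem_coe, Finset.mem_filter, Fintype.mem_piFinset, Finset.mem_range]
    constructor
    · rintro ⟨h1, h2⟩
      exact ⟨fun i => (Nat.lt_iff_le_pred hq).mpr (h1 i), h2⟩
    · rintro ⟨h1, h2⟩
      exact ⟨fun i => (Nat.lt_iff_le_pred hq).mp (h1 i), h2⟩
  have := Nat.card_coe_set_eq {a : Fin n → ℕ | (∀ i, a i ≤ q - 1) ∧ ((∑ i, a i : ℕ) : ℝ) ≤ d}
  rw [hset] at this
  rw [mCount]
  rw [show {a : Fin n → ℕ // (∀ i, a i ≤ q - 1) ∧ ((∑ i, a i : ℕ) : ℝ) ≤ d}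
      = ↥{a : Fin n → ℕ | (∀ i, a i ≤ q - 1) ∧ ((∑ i, a i : ℕ) : ℝ) ≤ d} from rfl]
  rw [hset, this, Set.ncard_coe_finset]

variable {F : Type*} [Field F] [Fintype F]

/-- monomial function -/
def mono (n : ℕ) (F : Type*) [Field F] (a : Fin n → ℕ) : (Fin n → F) → F :=
  fun x => ∏ i, x i ^ a i

/-- functions vanishing on a set -/
def vanishOn {n : ℕ} (U : Set (Fin n → F)) : Submodule F ((Fin n → F) → F) where
  carrier := {f | ∀ x ∈ U, f x = 0}
  add_mem' := fun {f} {g} hf hg x hx => by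
    simp only [Pi.add_apply, hf x hx, hg x hx, add_zero]
  zero_mem' := fun x hx => rfl
  smul_mem' := fun c f hf x hx => by
    simp only [Pi.smul_apply, hf x hx, smul_zero]

lemma mem_vanishOn {n : ℕ} {U : Set (Fin n → F)} {f : (Fin n → F) → F} :
    f ∈ vanishOn U ↔ ∀ x ∈ U, f x = 0 := Iff.rfl

lemma vanishOn_anti {n : ℕ} {U U' : Set (Fin n → F)} (h : U ⊆ U') :
    vanishOn (F := F) U' ≤ vanishOn U := fun f hf x hx => hf x (h hx)

/-- span of degree-≤ d monomial functions -/
noncomputable def Vd (q n : ℕ) (d : ℝ) (F : Type*) [Field F] [Fintype F] :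
    Submodule F ((Fin n → F) → F) :=
  Submodule.span F (mono n F '' ↑(expFinset q n d))

set_option linter.unusedSectionVars false

lemma pow_add_expand {n : ℕ} (a : Fin n → ℕ) (s t : Fin n → F) :
    mono n F a (s + t) =
      ∑ b ∈ Fintype.piFinset (fun i => Finset.range (a i + 1)),
        (∏ i, ((a i).choose (b i) : F)) * (mono n F b s * mono n F (a - b) t) := by
  have h1 : mono n F a (s + t) = ∏ i, (s i + t i) ^ a i := by
    simp [mono]
  rw [h1]
  have h2 : ∀ i ∈ Finset.univ, (s i + t i) ^ a i
      = ∑ k ∈ Finset.range (a i + 1), s i ^ k * t i ^ (a i - k) * ((a i).choose k : F) :=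
    fun i _ => add_pow (s i) (t i) (a i)
  rw [Finset.prod_congr rfl h2, Finset.prod_univ_sum]
  refine Finset.sum_congr rfl fun b hb => ?_
  simp only [mono, Pi.sub_apply, Finset.prod_mul_distrib]
  ring

lemma exists_decomp (q n : ℕ) (d : ℝ) {f : (Fin n → F) → F} (hf : f ∈ Vd q n d F) :
    ∃ G H : (Fin n → ℕ) → (Fin n → F) → F, ∀ s t : Fin n → F,
      f (s + t) = (∑ b ∈ expFinset q n (d/2), mono n F b s * G b t)
                + (∑ c ∈ expFinset q n (d/2), H c s * mono n F c t) := by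
  induction hf using Submodule.span_induction with
  | mem g hg =>
    obtain ⟨a, ha, rfl⟩ := hg
    rw [Finset.mem_coe, mem_expFinset] at ha
    obtain ⟨haq, had⟩ := ha
    set Pa := Fintype.piFinset (fun i => Finset.range (a i + 1)) with hPadef
    have hPa_le : ∀ b ∈ Pa, ∀ i, b i ≤ a i := by
      intro b hb i
      have := Fintype.mem_piFinset.mp hb i
      rw [Finset.mem_range] at this
      omega
    set C : (Fin n → ℕ) → F := fun b => ∏ i, ((a i).choose (b i) : F) with hCdef
    refine ⟨fun b t => if b ∈ Pa then C b * mono n F (a - b) t else 0,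
      fun c x => ∑ b ∈ Pa.filter
          (fun b => ¬(((∑ i, b i : ℕ) : ℝ) ≤ d/2) ∧ a - b = c),
        C b * mono n F b x, fun s t => ?_⟩
    rw [pow_add_expand,
      ← Finset.sum_filter_add_sum_filter_not Pa (fun b => ((∑ i, b i : ℕ) : ℝ) ≤ d/2)]
    congr 1
    · -- low part
      have hseteq : (expFinset q n (d/2)).filter (fun b => b ∈ Pa)
          = Pa.filter (fun b => ((∑ i, b i : ℕ) : ℝ) ≤ d/2) := by
        ext b
        simp only [Finset.mem_filter, mem_expFinset]
        constructor
        · rintro ⟨⟨h1, h2⟩, h3⟩; exact ⟨h3, h2⟩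
        · rintro ⟨h1, h2⟩
          exact ⟨⟨fun i => lt_of_le_of_lt (hPa_le b h1 i) (haq i), h2⟩, h1⟩
      calc ∑ b ∈ Pa.filter (fun b => ((∑ i, b i : ℕ) : ℝ) ≤ d/2),
              C b * (mono n F b s * mono n F (a - b) t)
          = ∑ b ∈ (expFinset q n (d/2)).filter (fun b => b ∈ Pa),
              mono n F b s * (C b * mono n F (a - b) t) := by
            rw [hseteq]; exact Finset.sum_congr rfl fun b _ => by ring
        _ = ∑ b ∈ expFinset q n (d/2),
              mono n F b s * (if b ∈ Pa then C b * mono n F (a - b) t else 0) := by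
            rw [Finset.sum_filter]
            exact Finset.sum_congr rfl fun b _ => by
              by_cases h : b ∈ Pa <;> simp [h]
    · -- high part
      have hmaps : ∀ b ∈ Pa.filter (fun b => ¬(((∑ i, b i : ℕ) : ℝ) ≤ d/2)),
          a - b ∈ expFinset q n (d/2) := by
        intro b hb
        rw [Finset.mem_filter] at hb
        obtain ⟨hbPa, hnl⟩ := hb
        rw [mem_expFinset]
        constructor
        · intro i
          exact lt_of_le_of_lt (Nat.sub_le _ _) (haq i)
        · have hsum : (∑ i, (a - b) i) + (∑ i, b i) = ∑ i, a i := by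
            rw [← Finset.sum_add_distrib]
            exact Finset.sum_congr rfl fun i _ => by
              simp only [Pi.sub_apply]
              exact Nat.sub_add_cancel (hPa_le b hbPa i)
          have hcast : ((∑ i, (a - b) i : ℕ) : ℝ) + ((∑ i, b i : ℕ) : ℝ)
              = ((∑ i, a i : ℕ) : ℝ) := by
            rw [← Nat.cast_add, hsum]
          push_neg at hnl
          linarith
      calc ∑ b ∈ Pa.filter (fun b => ¬(((∑ i, b i : ℕ) : ℝ) ≤ d/2)),
              C b * (mono n F b s * mono n F (a - b) t)
          = ∑ c ∈ expFinset q n (d/2),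
              ∑ b ∈ (Pa.filter (fun b => ¬(((∑ i, b i : ℕ) : ℝ) ≤ d/2))).filter
                  (fun b => a - b = c),
                C b * (mono n F b s * mono n F (a - b) t) := by
            exact (Finset.sum_fiberwise_of_maps_to hmaps _).symm
        _ = ∑ c ∈ expFinset q n (d/2),
              (∑ b ∈ Pa.filter
                  (fun b => ¬(((∑ i, b i : ℕ) : ℝ) ≤ d/2) ∧ a - b = c),
                C b * mono n F b s) * mono n F c t := by
            refine Finset.sum_congr rfl fun c _ => ?_
            rw [Finset.sum_mul, Finset.filter_filter]
            refine Finset.sum_congr rfl fun b hb => ?_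
            rw [Finset.mem_filter] at hb
            rw [← hb.2.2]
            ring
  | zero =>
    refine ⟨0, 0, fun s t => ?_⟩
    simp
  | add f g _ _ ihf ihg =>
    obtain ⟨Gf, Hf, hf⟩ := ihf
    obtain ⟨Gg, Hg, hg⟩ := ihg
    refine ⟨fun b t => Gf b t + Gg b t, fun c x => Hf c x + Hg c x, fun s t => ?_⟩
    have : (f + g) (s + t) = f (s + t) + g (s + t) := rfl
    rw [this, hf, hg]
    simp only [mul_add, add_mul, Finset.sum_add_distrib]
    ring
  | smul r f _ ihf =>
    obtain ⟨G, H, hf⟩ := ihf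
    refine ⟨fun b t => r * G b t, fun c x => r * H c x, fun s t => ?_⟩
    have : (r • f) (s + t) = r * f (s + t) := rfl
    rw [this, hf, mul_add, Finset.mul_sum, Finset.mul_sum]
    congr 1
    · exact Finset.sum_congr rfl fun b _ => by ring
    · exact Finset.sum_congr rfl fun c _ => by ring

lemma key_vanish (q n : ℕ) (d : ℝ) {f : (Fin n → F) → F}
    {G H : (Fin n → ℕ) → (Fin n → F) → F}
    (hf : ∀ s t : Fin n → F, f (s + t)
        = (∑ b ∈ expFinset q n (d/2), mono n F b s * G b t)
        + (∑ c ∈ expFinset q n (d/2), H c s * mono n F c t))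
    {T : Set (Fin n → F)} {s t : Fin n → F} (ht : t ∈ T)
    {k₁ k₂ : ℕ} {μ : Fin k₁ → F} {p : Fin k₁ → (Fin n → F)}
    {ν : Fin k₂ → F} {r : Fin k₂ → (Fin n → F)}
    (hp0 : ∀ i, ∀ t' ∈ T, f (p i + t') = 0)
    (hrT : ∀ j, r j ∈ T)
    (hr0 : ∀ j, f (s + r j) = 0)
    (hvs : ∀ b ∈ expFinset q n (d/2), mono n F b s = ∑ i, μ i * mono n F b (p i))
    (hvt : ∀ c ∈ expFinset q n (d/2), mono n F c t = ∑ j, ν j * mono n F c (r j)) :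
    f (s + t) = 0 := by
  set B := expFinset q n (d/2) with hB
  have swapH : ∀ x : Fin n → F, ∑ c ∈ B, H c x * mono n F c t
      = ∑ j, ν j * ∑ c ∈ B, H c x * mono n F c (r j) := by
    intro x
    calc ∑ c ∈ B, H c x * mono n F c t
        = ∑ c ∈ B, ∑ j, H c x * (ν j * mono n F c (r j)) := by
          refine Finset.sum_congr rfl fun c hc => ?_
          rw [hvt c hc, Finset.mul_sum]
      _ = ∑ j, ∑ c ∈ B, H c x * (ν j * mono n F c (r j)) := Finset.sum_comm
      _ = ∑ j, ν j * ∑ c ∈ B, H c x * mono n F c (r j) := by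
          refine Finset.sum_congr rfl fun j _ => ?_
          rw [Finset.mul_sum]
          exact Finset.sum_congr rfl fun c _ => by ring
  have swapG : ∀ y : Fin n → F, ∑ b ∈ B, mono n F b s * G b y
      = ∑ i, μ i * ∑ b ∈ B, mono n F b (p i) * G b y := by
    intro y
    calc ∑ b ∈ B, mono n F b s * G b y
        = ∑ b ∈ B, ∑ i, μ i * mono n F b (p i) * G b y := by
          refine Finset.sum_congr rfl fun b hb => ?_
          rw [hvs b hb, Finset.sum_mul]
      _ = ∑ i, ∑ b ∈ B, μ i * mono n F b (p i) * G b y := Finset.sum_comm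
      _ = ∑ i, μ i * ∑ b ∈ B, mono n F b (p i) * G b y := by
          refine Finset.sum_congr rfl fun i _ => ?_
          rw [Finset.mul_sum]
          exact Finset.sum_congr rfl fun b _ => by ring
  have hPit : ∀ i, ∑ b ∈ B, mono n F b (p i) * G b t
      = - ∑ c ∈ B, H c (p i) * mono n F c t := by
    intro i
    have h := hf (p i) t
    rw [hp0 i t ht] at h
    exact eq_neg_of_add_eq_zero_left h.symm
  have hPirj : ∀ i j, ∑ c ∈ B, H c (p i) * mono n F c (r j)
      = - ∑ b ∈ B, mono n F b (p i) * G b (r j) := by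
    intro i j
    have h := hf (p i) (r j)
    rw [hp0 i (r j) (hrT j)] at h
    exact eq_neg_of_add_eq_zero_right h.symm
  have hsrj : ∀ j, ∑ c ∈ B, H c s * mono n F c (r j)
      = - ∑ b ∈ B, mono n F b s * G b (r j) := by
    intro j
    have h := hf s (r j)
    rw [hr0 j] at h
    exact eq_neg_of_add_eq_zero_right h.symm
  rw [hf s t, swapG t, swapH s]
  have e1 : ∀ i ∈ (Finset.univ : Finset (Fin k₁)),
      μ i * ∑ b ∈ B, mono n F b (p i) * G b t
      = ∑ j, μ i * ν j * ∑ b ∈ B, mono n F b (p i) * G b (r j) := by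
    intro i _
    rw [hPit i, swapH (p i)]
    rw [mul_neg, Finset.mul_sum, ← Finset.sum_neg_distrib]
    refine Finset.sum_congr rfl fun j _ => ?_
    rw [hPirj i j]
    ring
  have e2 : ∀ j ∈ (Finset.univ : Finset (Fin k₂)),
      ν j * ∑ c ∈ B, H c s * mono n F c (r j)
      = -∑ i, μ i * ν j * ∑ b ∈ B, mono n F b (p i) * G b (r j) := by
    intro j _
    rw [hsrj j, swapG (r j)]
    rw [mul_neg, Finset.mul_sum, ← Finset.sum_neg_distrib, ← Finset.sum_neg_distrib]
    refine Finset.sum_congr rfl fun i _ => ?_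
    ring
  rw [Finset.sum_congr rfl e1, Finset.sum_congr rfl e2, Finset.sum_neg_distrib]
  rw [show (∑ i, ∑ j, μ i * ν j * ∑ b ∈ B, mono n F b (p i) * G b (r j))
      = ∑ j, ∑ i, μ i * ν j * ∑ b ∈ B, mono n F b (p i) * G b (r j) from Finset.sum_comm]
  exact add_neg_cancel _

universe u

lemma mono_linearIndependent {F : Type u} [Field F] [Fintype F] (q n : ℕ)
    (hF : Fintype.card F = q) (Df : Finset (Fin n → ℕ))
    (hDf : ∀ a ∈ Df, ∀ i, a i < q) :
    LinearIndependent F (fun a : ↥Df => mono n F ↑a) := by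
  classical
  have hq : 0 < q := hF ▸ Fintype.card_pos
  rw [Fintype.linearIndependent_iff]
  intro g hg a
  set σ := ULift.{u} (Fin n) with hσ
  set emb : (Fin n → ℕ) → (σ →₀ ℕ) :=
    fun a => Finsupp.equivFunOnFinite.symm (fun i => a i.down) with hemb
  have hembinj : Function.Injective emb := by
    intro a b hab
    have h2 := Finsupp.equivFunOnFinite.symm.injective hab
    funext j
    exact congrFun h2 (ULift.up j)
  set p : MvPolynomial σ F := ∑ a ∈ Df.attach, MvPolynomial.monomial (emb ↑a) (g a) with hp
  have hmem : p ∈ MvPolynomial.restrictDegree σ F (Fintype.card F - 1) := by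
    rw [MvPolynomial.mem_restrictDegree]
    intro m hm i
    have hsub := MvPolynomial.support_sum hm
    rw [Finset.mem_biUnion] at hsub
    obtain ⟨b, hb, hmb⟩ := hsub
    rw [MvPolynomial.support_monomial] at hmb
    have : m = emb ↑b := by
      by_cases hgb : g b = 0
      · rw [if_pos hgb] at hmb
        exact absurd hmb (Finset.notMem_empty m)
      · rw [if_neg hgb] at hmb
        exact Finset.mem_singleton.mp hmb
    subst this
    have : (emb ↑b) i = (↑b : Fin n → ℕ) i.down := by
      simp [hemb, Finsupp.equivFunOnFinite]
    rw [this, hF]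
    have := hDf ↑b b.2 i.down
    omega
  have heval : ∀ v : σ → F, MvPolynomial.eval v p = 0 := by
    intro v
    set x : Fin n → F := fun i => v (ULift.up i) with hx
    have h1 : MvPolynomial.eval v p
        = ∑ a ∈ Df.attach, g a * ∏ i, x i ^ (↑a : Fin n → ℕ) i := by
      rw [hp, map_sum]
      refine Finset.sum_congr rfl fun b _ => ?_
      rw [MvPolynomial.eval_monomial]
      congr 1
      rw [Finsupp.prod_fintype _ _ (fun i => pow_zero _)]
      rw [← (Equiv.ulift (α := Fin n)).symm.prod_comp
        (fun i : σ => v i ^ (emb ↑b) i)]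
      refine Finset.prod_congr rfl fun j _ => ?_
      have : (emb ↑b) (Equiv.ulift.symm j) = (↑b : Fin n → ℕ) j := by
        simp [hemb, Finsupp.equivFunOnFinite, Equiv.ulift]
      rw [this]
      rfl
    rw [h1]
    have h2 := congrFun hg x
    rw [Finset.sum_apply] at h2
    simp only [Pi.smul_apply, smul_eq_mul, Pi.zero_apply, Finset.univ_eq_attach] at h2
    rw [← h2]
    refine Finset.sum_congr rfl fun b _ => ?_
    simp [mono]
  have hp0 : p = 0 := MvPolynomial.eq_zero_of_eval_eq_zero σ F p heval hmem
  have hcoeff : MvPolynomial.coeff (emb ↑a) p = g a := by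
    rw [hp, MvPolynomial.coeff_sum]
    rw [Finset.sum_eq_single a]
    · rw [MvPolynomial.coeff_monomial, if_pos rfl]
    · intro b _ hba
      rw [MvPolynomial.coeff_monomial, if_neg]
      intro hc
      exact hba (Subtype.ext (hembinj hc))
    · intro ha
      exact absurd (Finset.mem_attach _ _) ha
  rw [hp0, MvPolynomial.coeff_zero] at hcoeff
  exact hcoeff.symm

lemma finrank_Vd {F : Type u} [Field F] [Fintype F] (q n : ℕ)
    (hF : Fintype.card F = q) (d : ℝ) :
    Module.finrank F ↥(Vd q n d F) = (expFinset q n d).card := by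
  have hli := mono_linearIndependent q n hF (expFinset q n d)
    (fun a ha => (mem_expFinset.mp ha).1)
  have himg : mono n F '' ↑(expFinset q n d)
      = Set.range (fun a : ↥(expFinset q n d) => mono n F ↑a) := by
    rw [Set.image_eq_range]
    rfl
  rw [Vd, himg, finrank_span_eq_card hli, Fintype.card_coe]

noncomputable def vecLow (q n : ℕ) (d : ℝ) (F : Type*) [Field F] [Fintype F]
    (x : Fin n → F) : ↥(expFinset q n (d/2)) → F := fun b => mono n F ↑b x

noncomputable def spanV (q n : ℕ) (d : ℝ) (F : Type*) [Field F] [Fintype F]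
    (S' : Finset (Fin n → F)) : Submodule F (↥(expFinset q n (d/2)) → F) :=
  Submodule.span F (vecLow q n d F '' ↑S')

def covered {n : ℕ} (S T : Set (Fin n → F)) (S' T' : Finset (Fin n → F)) :
    Set (Fin n → F) :=
  ((↑S' : Set (Fin n → F)) + T) ∪ (S + (↑T' : Set (Fin n → F)))

noncomputable def Vsub (q n : ℕ) (d : ℝ) (F : Type*) [Field F] [Fintype F]
    (S T : Set (Fin n → F)) (S' T' : Finset (Fin n → F)) :
    Submodule F ((Fin n → F) → F) :=
  Vd q n d F ⊓ vanishOn ((S + T)ᶜ ∪ covered S T S' T')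

lemma span_extract (q n : ℕ) (d : ℝ) (S' : Finset (Fin n → F)) {s : Fin n → F}
    (h : vecLow q n d F s ∈ spanV q n d F S') :
    ∃ (k : ℕ) (μ : Fin k → F) (p : Fin k → (Fin n → F)),
      (∀ i, p i ∈ S') ∧
      ∀ b ∈ expFinset q n (d/2), mono n F b s = ∑ i, μ i * mono n F b (p i) := by
  rw [spanV] at h
  obtain ⟨k, μ, g, hsum⟩ := Submodule.mem_span_set'.mp h
  have hsel : ∀ i : Fin k, ∃ x, x ∈ S' ∧ vecLow q n d F x = ↑(g i) := by
    intro i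
    obtain ⟨x, hx1, hx2⟩ := (g i).2
    exact ⟨x, Finset.mem_coe.mp hx1, hx2⟩
  choose p hpS hpv using hsel
  refine ⟨k, μ, p, hpS, fun b hb => ?_⟩
  have h2 := congrFun hsum (⟨b, hb⟩ : ↥(expFinset q n (d/2)))
  rw [Finset.sum_apply] at h2
  have h3 : ∀ i ∈ (Finset.univ : Finset (Fin k)),
      (μ i • (↑(g i) : ↥(expFinset q n (d/2)) → F)) ⟨b, hb⟩
        = μ i * mono n F b (p i) := by
    intro i _
    rw [← hpv i]
    rfl
  rw [Finset.sum_congr rfl h3] at h2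
  exact h2.symm.trans rfl

lemma core (q n : ℕ) (d : ℝ) (S T : Set (Fin n → F)) :
    ∀ (N : ℕ) (S' T' : Finset (Fin n → F)),
      Module.finrank F ↥(Vsub q n d F S T S' T') ≤ N → ↑S' ⊆ S → ↑T' ⊆ T →
      ∃ S'' T'' : Finset (Fin n → F), ↑S'' ⊆ S ∧ ↑T'' ⊆ T ∧ S' ⊆ S'' ∧ T' ⊆ T'' ∧
        S''.card + Module.finrank F ↥(spanV q n d F S')
          ≤ S'.card + (expFinset q n (d/2)).card ∧
        T''.card + Module.finrank F ↥(spanV q n d F T')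
          ≤ T'.card + (expFinset q n (d/2)).card ∧
        Vsub q n d F S T S'' T'' = ⊥ := by
  have hrkB : ∀ S' : Finset (Fin n → F),
      Module.finrank F ↥(spanV q n d F S') ≤ (expFinset q n (d/2)).card := by
    intro S'
    have h := Submodule.finrank_le (spanV q n d F S')
    rwa [Module.finrank_fintype_fun_eq_card, Fintype.card_coe] at h
  intro N
  induction N with
  | zero =>
    intro S' T' hrk hS hT
    have hbot : Vsub q n d F S T S' T' = ⊥ := by
      rw [← Submodule.finrank_eq_zero (R := F)]
      omega
    exact ⟨S', T', hS, hT, le_refl _, le_refl _,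
      by have := hrkB S'; omega, by have := hrkB T'; omega, hbot⟩
  | succ N ih =>
    intro S' T' hrk hS hT
    by_cases hbot : Vsub q n d F S T S' T' = ⊥
    · exact ⟨S', T', hS, hT, le_refl _, le_refl _,
        by have := hrkB S'; omega, by have := hrkB T'; omega, hbot⟩
    obtain ⟨f, hfmem, hf0⟩ := (Submodule.ne_bot_iff _).mp hbot
    obtain ⟨x, hx⟩ : ∃ x, f x ≠ 0 := by
      by_contra h
      push_neg at h
      exact hf0 (funext h)
    have hxST : x ∈ S + T := by
      by_contra hxc
      exact hx (hfmem.2 x (Or.inl hxc))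
    obtain ⟨s, hs, t, ht, rfl⟩ := Set.mem_add.mp hxST
    by_cases hsb : vecLow q n d F s ∈ spanV q n d F S'
    · by_cases htb : vecLow q n d F t ∈ spanV q n d F T'
      · -- contradiction: f (s + t) = 0
        exfalso
        apply hx
        obtain ⟨G, H, hGH⟩ := exists_decomp q n d hfmem.1
        obtain ⟨k₁, μ, p, hpS, hvs⟩ := span_extract q n d S' hsb
        obtain ⟨k₂, ν, r, hrT', hvt⟩ := span_extract q n d T' htb
        refine key_vanish q n d hGH ht ?_ (fun j => hT (hrT' j)) ?_ hvs hvt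
        · intro i t' ht'
          exact hfmem.2 _ (Or.inr (Or.inl
            (Set.add_mem_add (Finset.mem_coe.mpr (hpS i)) ht')))
        · intro j
          exact hfmem.2 _ (Or.inr (Or.inr
            (Set.add_mem_add hs (Finset.mem_coe.mpr (hrT' j)))))
      · -- t-step
        have hcov : covered S T S' T' ⊆ covered S T S' (insert t T') := by
          intro z hz
          rcases hz with h | h
          · exact Or.inl h
          · rcases Set.mem_add.mp h with ⟨u, hu, v, hv, rfl⟩
            refine Or.inr (Set.add_mem_add hu ?_)
            rw [Finset.coe_insert]
            exact Set.mem_insert_iff.mpr (Or.inr hv)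
        have hle : Vsub q n d F S T S' (insert t T') ≤ Vsub q n d F S T S' T' :=
          inf_le_inf_left _ (vanishOn_anti (Set.union_subset_union_right _ hcov))
        have hnotmem : f ∉ Vsub q n d F S T S' (insert t T') := by
          intro hmem
          refine hx (hmem.2 _ (Or.inr (Or.inr (Set.add_mem_add hs ?_))))
          rw [Finset.coe_insert]
          exact Set.mem_insert t ↑T'
        have hlt : Vsub q n d F S T S' (insert t T') < Vsub q n d F S T S' T' :=
          lt_of_le_of_ne hle (fun heq => hnotmem (heq ▸ hfmem))
        have hfr : Module.finrank F ↥(Vsub q n d F S T S' (insert t T')) ≤ N := by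
          have := Submodule.finrank_lt_finrank_of_lt hlt
          omega
        obtain ⟨S'', T'', h1, h2, h3, h4, h5, h6, h7⟩ := ih S' (insert t T') hfr hS
          (by rw [Finset.coe_insert]; exact Set.insert_subset ht hT)
        refine ⟨S'', T'', h1, h2, h3, (Finset.subset_insert t T').trans h4, h5, ?_, h7⟩
        have hspanlt : spanV q n d F T' < spanV q n d F (insert t T') := by
          refine lt_of_le_of_ne (Submodule.span_mono (Set.image_mono ?_))
            (fun heq => htb ?_)
          · rw [Finset.coe_insert]
            exact Set.subset_insert _ _
          · rw [heq]
            refine Submodule.subset_span ⟨t, ?_, rfl⟩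
            rw [Finset.coe_insert]
            exact Set.mem_insert t ↑T'
        have hrk2 := Submodule.finrank_lt_finrank_of_lt hspanlt
        have hcard := Finset.card_insert_le t T'
        omega
    · -- s-step
      have hcov : covered S T S' T' ⊆ covered S T (insert s S') T' := by
        intro z hz
        rcases hz with h | h
        · rcases Set.mem_add.mp h with ⟨u, hu, v, hv, rfl⟩
          refine Or.inl (Set.add_mem_add ?_ hv)
          rw [Finset.coe_insert]
          exact Set.mem_insert_iff.mpr (Or.inr hu)
        · exact Or.inr h
      have hle : Vsub q n d F S T (insert s S') T' ≤ Vsub q n d F S T S' T' :=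
        inf_le_inf_left _ (vanishOn_anti (Set.union_subset_union_right _ hcov))
      have hnotmem : f ∉ Vsub q n d F S T (insert s S') T' := by
        intro hmem
        refine hx (hmem.2 _ (Or.inr (Or.inl (Set.add_mem_add ?_ ht))))
        rw [Finset.coe_insert]
        exact Set.mem_insert s ↑S'
      have hlt : Vsub q n d F S T (insert s S') T' < Vsub q n d F S T S' T' :=
        lt_of_le_of_ne hle (fun heq => hnotmem (heq ▸ hfmem))
      have hfr : Module.finrank F ↥(Vsub q n d F S T (insert s S') T') ≤ N := by
        have := Submodule.finrank_lt_finrank_of_lt hlt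
        omega
      obtain ⟨S'', T'', h1, h2, h3, h4, h5, h6, h7⟩ := ih (insert s S') T' hfr
        (by rw [Finset.coe_insert]; exact Set.insert_subset hs hS) hT
      refine ⟨S'', T'', h1, h2, (Finset.subset_insert s S').trans h3, h4, ?_, h6, h7⟩
      have hspanlt : spanV q n d F S' < spanV q n d F (insert s S') := by
        refine lt_of_le_of_ne (Submodule.span_mono (Set.image_mono ?_))
          (fun heq => hsb ?_)
        · rw [Finset.coe_insert]
          exact Set.subset_insert _ _
        · rw [heq]
          refine Submodule.subset_span ⟨s, ?_, rfl⟩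
          rw [Finset.coe_insert]
          exact Set.mem_insert s ↑S'
      have hrk2 := Submodule.finrank_lt_finrank_of_lt hspanlt
      have hcard := Finset.card_insert_le s S'
      omega

lemma count_U {F : Type u} [Field F] [Fintype F] (q n : ℕ) (hF : Fintype.card F = q)
    (d : ℝ) (S T : Set (Fin n → F)) (S₀ T₀ : Finset (Fin n → F))
    (hbot : Vsub q n d F S T S₀ T₀ = ⊥) :
    (expFinset q n d).card + ((S + T) \ covered S T S₀ T₀).ncard ≤ q ^ n := by
  classical
  set U := (S + T) \ covered S T S₀ T₀ with hU
  haveI : Fintype ↥U := Fintype.ofFinite _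
  set dlt : (Fin n → F) → ((Fin n → F) → F) :=
    fun y => Pi.single (M := fun _ : Fin n → F => F) y (1 : F) with hdlt
  have hdelta : ∀ u : ↥U, dlt (u : Fin n → F) ∈ vanishOn Uᶜ := by
    intro u x hx
    have hne : x ≠ (u : Fin n → F) := by
      intro hxy
      apply hx
      rw [hxy]
      exact u.2
    exact Pi.single_eq_of_ne hne 1
  have hli0 : LinearIndependent F (fun u : ↥U => dlt (u : Fin n → F)) := by
    have hb := (Pi.basisFun F (Fin n → F)).linearIndependent
    have hcomp := hb.comp (fun u : ↥U => (u : Fin n → F)) Subtype.val_injective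
    have heqf : (⇑(Pi.basisFun F (Fin n → F)) ∘ fun u : ↥U => (u : Fin n → F))
        = fun u : ↥U => dlt (u : Fin n → F) := by
      funext u
      simp [hdlt, Function.comp, Pi.basisFun_apply]
    rwa [heqf] at hcomp
  have hli : LinearIndependent F
      (fun u : ↥U => (⟨dlt (u : Fin n → F), hdelta u⟩ :
        ↥(vanishOn (F := F) Uᶜ))) := by
    apply LinearIndependent.of_comp (vanishOn (F := F) Uᶜ).subtype
    exact hli0
  have hcard1 : U.ncard ≤ Module.finrank F ↥(vanishOn (F := F) Uᶜ) := by
    have h := hli.fintype_card_le_finrank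
    rwa [Set.ncard_eq_toFinset_card', Set.toFinset_card]
  have hinf : Vd q n d F ⊓ vanishOn Uᶜ = ⊥ := by
    rw [eq_bot_iff, ← hbot]
    intro f hf
    refine ⟨hf.1, fun x hx => hf.2 x ?_⟩
    intro hxU
    rcases hx with h | h
    · exact h hxU.1
    · exact hxU.2 h
  have hVd : Module.finrank F ↥(Vd q n d F) = (expFinset q n d).card :=
    finrank_Vd q n hF d
  have hsum := Submodule.finrank_sup_add_finrank_inf_eq (Vd q n d F)
    (vanishOn (F := F) Uᶜ)
  rw [hinf, finrank_bot] at hsum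
  have hbound := Submodule.finrank_le (Vd q n d F ⊔ vanishOn (F := F) Uᶜ)
  rw [Module.finrank_fintype_fun_eq_card] at hbound
  have hcX : Fintype.card (Fin n → F) = q ^ n := by
    rw [Fintype.card_fun, hF, Fintype.card_fin]
  omega

end SumsetAux

theorem sumset_union_of_sumsets_of_subsets_quantitative (q n : ℕ) (hq : IsPrimePow q)
    (hn : 0 < n) (d : ℝ) (hd : 0 ≤ d)
    (F : Type*) [Field F] [Fintype F] (hF : Fintype.card F = q)
    (S T : Set (Fin n → F)) :
    ∃ S' T' : Set (Fin n → F), S' ⊆ S ∧ T' ⊆ T ∧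
      ((Nat.card S' : ℝ) + Nat.card T' ≤
        2 * mCount q n (d / 2) + (q : ℝ) ^ n - mCount q n d) ∧
      (S' + T) ∪ (S + T') = S + T := by
  classical
  have hq0 : 0 < q := hF ▸ Fintype.card_pos
  obtain ⟨S₀, T₀, hS₀, hT₀, -, -, hcS, hcT, hbot⟩ := SumsetAux.core q n d S T
    (Module.finrank F ↥(SumsetAux.Vsub q n d F S T ∅ ∅)) ∅ ∅ le_rfl
    (by simp) (by simp)
  set U := (S + T) \ SumsetAux.covered S T S₀ T₀ with hU
  have hcount := SumsetAux.count_U q n hF d S T S₀ T₀ hbot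
  haveI : Fintype ↥U := Fintype.ofFinite _
  have hsel : ∀ u : ↥U, ∃ sv, sv ∈ S ∧ ∃ tv, tv ∈ T ∧ sv + tv = ↑u := fun u => by
    obtain ⟨a, ha, b, hb, hab⟩ := Set.mem_add.mp u.2.1
    exact ⟨a, ha, b, hb, hab⟩
  choose sel hselS hsel2 using hsel
  set SExtra : Finset (Fin n → F) := Finset.image sel Finset.univ with hSE
  set Sfin : Finset (Fin n → F) := S₀ ∪ SExtra with hSfin
  have hSfinS : (↑Sfin : Set (Fin n → F)) ⊆ S := by
    intro x hx
    rw [Finset.coe_union, Set.mem_union] at hx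
    rcases hx with h | h
    · exact hS₀ h
    · rw [Finset.mem_coe, hSE, Finset.mem_image] at h
      obtain ⟨u, -, rfl⟩ := h
      exact hselS u
  refine ⟨(↑Sfin : Set (Fin n → F)), (↑T₀ : Set (Fin n → F)), hSfinS, hT₀, ?_, ?_⟩
  · -- cardinality bound
    have e1 : Nat.card ↥(↑Sfin : Set (Fin n → F)) = Sfin.card := by
      rw [Nat.card_coe_set_eq, Set.ncard_coe_finset]
    have e2 : Nat.card ↥(↑T₀ : Set (Fin n → F)) = T₀.card := by
      rw [Nat.card_coe_set_eq, Set.ncard_coe_finset]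
    rw [e1, e2]
    have h1 : Sfin.card ≤ S₀.card + SExtra.card := Finset.card_union_le _ _
    have h2 : SExtra.card ≤ U.ncard := by
      rw [Set.ncard_eq_toFinset_card', Set.toFinset_card]
      calc SExtra.card ≤ Finset.univ.card := Finset.card_image_le
        _ = Fintype.card ↥U := Finset.card_univ
    have h3 : S₀.card ≤ (SumsetAux.expFinset q n (d/2)).card := by
      simp only [Finset.card_empty] at hcS
      omega
    have h4 : T₀.card ≤ (SumsetAux.expFinset q n (d/2)).card := by
      simp only [Finset.card_empty] at hcT
      omega
    rw [SumsetAux.mCount_eq q n hq0 (d/2), SumsetAux.mCount_eq q n hq0 d]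
    have hq' : ((SumsetAux.expFinset q n d).card : ℝ) + (U.ncard : ℝ) ≤ (q : ℝ) ^ n := by
      have h5 : (((SumsetAux.expFinset q n d).card + U.ncard : ℕ) : ℝ)
          ≤ ((q ^ n : ℕ) : ℝ) := Nat.cast_le.mpr hcount
      push_cast at h5
      linarith
    have hS' : (Sfin.card : ℝ)
        ≤ ((SumsetAux.expFinset q n (d/2)).card : ℝ) + (U.ncard : ℝ) := by
      have h6 : Sfin.card ≤ (SumsetAux.expFinset q n (d/2)).card + U.ncard := by omega
      exact_mod_cast h6
    have hT' : (T₀.card : ℝ) ≤ ((SumsetAux.expFinset q n (d/2)).card : ℝ) := by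
      exact_mod_cast h4
    linarith
  · -- coverage
    apply Set.Subset.antisymm
    · rintro z (h | h)
      · obtain ⟨a, ha, b, hb, rfl⟩ := Set.mem_add.mp h
        exact Set.add_mem_add (hSfinS ha) hb
      · obtain ⟨a, ha, b, hb, rfl⟩ := Set.mem_add.mp h
        exact Set.add_mem_add ha (hT₀ hb)
    · intro z hz
      by_cases hzc : z ∈ SumsetAux.covered S T S₀ T₀
      · rcases hzc with h | h
        · obtain ⟨a, ha, b, hb, rfl⟩ := Set.mem_add.mp h
          refine Or.inl (Set.add_mem_add ?_ hb)
          rw [Finset.mem_coe] at ha ⊢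
          exact Finset.mem_union_left _ ha
        · exact Or.inr h
      · have hzU : z ∈ U := ⟨hz, hzc⟩
        obtain ⟨tv, htv, heq⟩ := hsel2 ⟨z, hzU⟩
        have hmem : sel ⟨z, hzU⟩ ∈ Sfin := by
          refine Finset.mem_union_right _ ?_
          rw [hSE, Finset.mem_image]
          exact ⟨⟨z, hzU⟩, Finset.mem_univ _, rfl⟩
        have hfin : sel ⟨z, hzU⟩ + tv ∈ (↑Sfin : Set (Fin n → F)) + T :=
          Set.add_mem_add (Finset.mem_coe.mpr hmem) htv
        rw [heq] at hfin
        exact Or.inl hfin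
end

section
/- Let q be a prime power, n a positive integer, and let S be a subset of F_q^n containing no three-term arithmetic progression, i.e., there are no elements a, b, c ∈ S, not all equal, with a + c = 2b. Then |S| ≤ M(F_q^n). -/
open Finset

lemma support_lemma {X : Type*} [Fintype X] {K : Type*} [Field K]
    (W : Submodule K (X → K)) :
    ∃ h ∈ W, Module.finrank K W ≤ Nat.card {x // h x ≠ 0} := by
  classical
  set P : Finset X → Prop := fun Y => ∀ w ∈ W, (∀ y ∈ Y, w y = 0) → w = 0 with hP
  have hPuniv : P univ := fun w _ hw => funext fun x => hw x (mem_univ x)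
  obtain ⟨Y, hYmem, hYmin⟩ := Finset.exists_min_image
    ((univ.powerset).filter fun Y => P Y) Finset.card
    ⟨univ, by simp only [Finset.mem_filter, Finset.mem_powerset]; exact ⟨subset_rfl, hPuniv⟩⟩
  have hY : P Y := (Finset.mem_filter.1 hYmem).2
  have key : ∀ y : {y // y ∈ Y}, ∃ w, w ∈ W ∧ (∀ y' ∈ Y.erase ↑y, w y' = 0) ∧ w ≠ 0 := by
    rintro ⟨y, hy⟩
    by_contra hcon
    push_neg at hcon
    have hPe : P (Y.erase y) := fun w hw hv => hcon w hw hv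
    have h1 : Y.card ≤ (Y.erase y).card := hYmin _ (by
      simp only [Finset.mem_filter, Finset.mem_powerset]
      exact ⟨(Y.erase y).subset_univ, hPe⟩)
    have h2 := Finset.card_erase_lt_of_mem hy
    omega
  choose w hwW hwvan hwne using key
  have hwy : ∀ y : {y // y ∈ Y}, w y ↑y ≠ 0 := by
    intro y hy0
    refine hwne y (hY _ (hwW y) ?_)
    intro y' hy'
    rcases eq_or_ne y' (↑y : X) with rfl | hne
    · exact hy0
    · exact hwvan y y' (Finset.mem_erase.2 ⟨hne, hy'⟩)
  set h : X → K := ∑ y ∈ Y.attach, (w y ↑y)⁻¹ • w y with hdef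
  have hmem : h ∈ W := Submodule.sum_mem _ fun y _ => Submodule.smul_mem _ _ (hwW y)
  have hone : ∀ y ∈ Y, h y = 1 := by
    intro y hy
    have : h y = ∑ y' ∈ Y.attach, (w y' ↑y')⁻¹ * w y' y := by
      simp [hdef, Finset.sum_apply]
    rw [this, Finset.sum_eq_single ⟨y, hy⟩]
    · exact inv_mul_cancel₀ (hwy ⟨y, hy⟩)
    · intro y' _ hne
      rw [hwvan y' y (Finset.mem_erase.2 ⟨fun hh => hne (Subtype.ext hh.symm), hy⟩), mul_zero]
    · intro hh; exact absurd (Finset.mem_attach _ _) hh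
  refine ⟨h, hmem, ?_⟩
  -- finrank W ≤ Y.card
  have hres : Module.finrank K W ≤ Y.card := by
    let ρ : W →ₗ[K] ({y // y ∈ Y} → K) :=
      { toFun := fun v y => (v : X → K) ↑y
        map_add' := fun a b => rfl
        map_smul' := fun c a => rfl }
    have hinj : Function.Injective ρ := by
      intro a b hab
      ext x : 2
      have : (↑a - ↑b : X → K) = 0 := hY _ (Submodule.sub_mem _ a.2 b.2) (by
        intro y hy
        have := congrFun hab ⟨y, hy⟩
        simpa [ρ, sub_eq_zero] using this)
      have := congrFun this x
      simpa [sub_eq_zero] using this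
    calc Module.finrank K W ≤ Module.finrank K ({y // y ∈ Y} → K) :=
          LinearMap.finrank_le_finrank_of_injective hinj
      _ = Y.card := by simp [Module.finrank_pi]
  refine hres.trans ?_
  have : Nat.card {x // h x ≠ 0} = (univ.filter fun x => h x ≠ 0).card := by
    rw [Nat.card_eq_fintype_card]; exact Fintype.card_subtype _
  rw [this]
  apply Finset.card_le_card
  intro y hy
  simp only [Finset.mem_filter, Finset.mem_univ, true_and]
  rw [hone y hy]; exact one_ne_zero

lemma row_eq {F : Type*} [Field F] {σ : Type*} [Fintype σ] {ι : Type*} (A : Finset ι)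
    (h : σ → F) (M1 : σ → ι → F) (C1 : ι → F) (C2 : ι → F) (M2 : ι → σ → F)
    (M3 : ι → F) (C3 : ι → σ → F)
    (hker : ∀ α ∈ A, (∑ a, h a * M1 a α) = 0)
    (T : σ → F)
    (hT : ∀ a, T a = (∑ α ∈ A, M1 a α * C1 α) +
      ((∑ β ∈ A, C2 β * M2 β a) + (∑ γ ∈ A, M3 γ * C3 γ a))) :
    ∑ a, h a * T a = (∑ β ∈ A, C2 β * (∑ a, h a * M2 β a)) +
      (∑ γ ∈ A, M3 γ * (∑ a, h a * C3 γ a)) := by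
  have e1 : ∑ a, h a * T a =
      (∑ a, h a * ∑ α ∈ A, M1 a α * C1 α) +
      ((∑ a, h a * ∑ β ∈ A, C2 β * M2 β a) + (∑ a, h a * ∑ γ ∈ A, M3 γ * C3 γ a)) := by
    rw [← Finset.sum_add_distrib, ← Finset.sum_add_distrib]
    exact Finset.sum_congr rfl fun a _ => by rw [hT a, mul_add, mul_add]
  rw [e1]
  have e2 : (∑ a, h a * ∑ α ∈ A, M1 a α * C1 α) = 0 := by
    have : (∑ a, h a * ∑ α ∈ A, M1 a α * C1 α) =
        ∑ α ∈ A, (∑ a, h a * M1 a α) * C1 α := by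
      simp only [Finset.mul_sum]
      rw [Finset.sum_comm]
      refine Finset.sum_congr rfl fun α _ => ?_
      rw [Finset.sum_mul]
      exact Finset.sum_congr rfl fun a _ => by ring
    rw [this]
    exact Finset.sum_eq_zero fun α hα => by rw [hker α hα, zero_mul]
  have e3 : (∑ a, h a * ∑ β ∈ A, C2 β * M2 β a) =
      ∑ β ∈ A, C2 β * (∑ a, h a * M2 β a) := by
    simp only [Finset.mul_sum]
    rw [Finset.sum_comm]
    refine Finset.sum_congr rfl fun β _ => ?_
    exact Finset.sum_congr rfl fun a _ => by ring
  have e4 : (∑ a, h a * ∑ γ ∈ A, M3 γ * C3 γ a) =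
      ∑ γ ∈ A, M3 γ * (∑ a, h a * C3 γ a) := by
    simp only [Finset.mul_sum]
    rw [Finset.sum_comm]
    refine Finset.sum_congr rfl fun γ _ => ?_
    exact Finset.sum_congr rfl fun a _ => by ring
  rw [e2, e3, e4, zero_add]

lemma key_count {F : Type*} [Field F] {σ : Type*} [Fintype σ] [DecidableEq σ] {ι : Type*}
    (A : Finset ι) (T : σ → σ → σ → F)
    (hdiag : ∀ a b c : σ, T a b c = if a = b ∧ b = c then 1 else 0)
    (e1 e2 e3 : σ → ι → F) (C1 C2 C3 : ι → σ → σ → F)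
    (hrep : ∀ a b c : σ, T a b c = (∑ α ∈ A, e1 a α * C1 α b c) +
        ((∑ β ∈ A, e2 b β * C2 β a c) + (∑ γ ∈ A, e3 c γ * C3 γ a b))) :
    Fintype.card σ ≤ 3 * A.card := by
  classical
  set k := A.card with hk
  -- the linear map recording the class-1 moments
  set Φ : (σ → F) →ₗ[F] (↥A → F) :=
    { toFun := fun h α => ∑ a : σ, h a * e1 a ↑α
      map_add' := fun g h => by
        funext α
        simp only [Pi.add_apply, add_mul, Finset.sum_add_distrib]
      map_smul' := fun c g => by
        funext α
        simp only [Pi.smul_apply, smul_eq_mul, RingHom.id_apply, Finset.mul_sum]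
        exact Finset.sum_congr rfl fun a _ => by ring } with hΦ
  have hrankS : Fintype.card σ ≤ k + Module.finrank F (LinearMap.ker Φ) := by
    have hrn := LinearMap.finrank_range_add_finrank_ker Φ
    have h1 : Module.finrank F (σ → F) = Fintype.card σ := by rw [Module.finrank_pi]
    have h2 : Module.finrank F (LinearMap.range Φ) ≤ k := by
      refine (Submodule.finrank_le _).trans ?_
      rw [Module.finrank_pi, Fintype.card_coe]
    omega
  obtain ⟨h, hker, hsupp⟩ := support_lemma (LinearMap.ker Φ)
  have hΦh : ∀ α : ↥A, ∑ a : σ, h a * e1 a ↑α = 0 := by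
    intro α
    exact congrFun (LinearMap.mem_ker.1 hker) α
  set N : σ → σ → F := fun b c => ∑ a : σ, h a * T a b c with hN
  have hNdiag : ∀ b c : σ, N b c = if c = b then h b else 0 := by
    intro b c
    show (∑ a : σ, h a * T a b c) = _
    simp only [hdiag]
    by_cases hbc : c = b
    · subst hbc
      rw [if_pos rfl, Finset.sum_eq_single c]
      · simp
      · intro a _ hne
        rw [if_neg, mul_zero]
        rintro ⟨rfl, -⟩; exact hne rfl
      · intro hne; exact absurd (Finset.mem_univ c) hne
    · rw [if_neg hbc]
      refine Finset.sum_eq_zero fun a _ => ?_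
      rw [if_neg, mul_zero]
      rintro ⟨rfl, rfl⟩; exact hbc rfl
  have hNsingle : ∀ b : σ, N b = Pi.single b (h b) := by
    intro b
    funext c
    rw [hNdiag b c, Pi.single_apply]
  set v : ↥A ⊕ ↥A → (σ → F) := Sum.elim
    (fun β : ↥A => fun c : σ => ∑ a : σ, h a * C2 ↑β a c)
    (fun γ : ↥A => fun c : σ => e3 c ↑γ) with hv
  set U : Submodule F (σ → F) := Submodule.span F (Set.range v) with hU
  have hrow : ∀ b : σ, N b ∈ U := by
    intro b
    have hexp : N b = (∑ β ∈ A.attach, e2 b ↑β • v (Sum.inl β)) +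
        (∑ γ ∈ A.attach, (∑ a : σ, h a * C3 ↑γ a b) • v (Sum.inr γ)) := by
      funext c
      have happ := row_eq A h
        (fun a α => e1 a α) (fun α => C1 α b c)
        (fun β => e2 b β) (fun β a => C2 β a c)
        (fun γ => e3 c γ) (fun γ a => C3 γ a b)
        (fun α hα => hΦh ⟨α, hα⟩)
        (fun a => T a b c)
        (fun a => hrep a b c)
      show (∑ a : σ, h a * T a b c) = _
      rw [happ, Pi.add_apply, Finset.sum_apply, Finset.sum_apply]
      simp only [Pi.smul_apply, smul_eq_mul, hv, Sum.elim_inl, Sum.elim_inr]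
      rw [Finset.sum_attach A (fun β => e2 b β * ∑ a : σ, h a * C2 β a c),
          Finset.sum_attach A (fun γ => (∑ a : σ, h a * C3 γ a b) * e3 c γ)]
      congr 1
      exact Finset.sum_congr rfl fun γ _ => mul_comm _ _
    rw [hexp]
    exact Submodule.add_mem _
      (Submodule.sum_mem _ fun β _ => Submodule.smul_mem _ _
        (Submodule.subset_span ⟨Sum.inl β, rfl⟩))
      (Submodule.sum_mem _ fun γ _ => Submodule.smul_mem _ _
        (Submodule.subset_span ⟨Sum.inr γ, rfl⟩))
  have hindep : LinearIndependent F (fun b : {a : σ // h a ≠ 0} => N ↑b) := by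
    rw [Fintype.linearIndependent_iff]
    intro g hg b
    have hgb := congrFun hg ↑b
    simp only [Finset.sum_apply, Pi.smul_apply, smul_eq_mul, Pi.zero_apply, hNsingle] at hgb
    rw [Finset.sum_eq_single b] at hgb
    · rw [Pi.single_eq_same] at hgb
      rcases mul_eq_zero.1 hgb with h' | h'
      · exact h'
      · exact absurd h' b.2
    · intro b' _ hne
      rw [Pi.single_eq_of_ne, mul_zero]
      intro hh
      exact hne (Subtype.ext hh.symm)
    · intro hne; exact absurd (Finset.mem_univ b) hne
  have hcard_supp : Fintype.card {a : σ // h a ≠ 0} ≤ 2 * k := by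
    have h1 : Fintype.card {a : σ // h a ≠ 0} ≤ Module.finrank F U := by
      have hfam : LinearIndependent F (fun b : {a : σ // h a ≠ 0} =>
          (⟨N ↑b, hrow ↑b⟩ : U)) := by
        have hcomp : (fun b : {a : σ // h a ≠ 0} => N ↑b) =
            (U.subtype) ∘ (fun b : {a : σ // h a ≠ 0} => (⟨N ↑b, hrow ↑b⟩ : U)) := rfl
        rw [hcomp] at hindep
        exact LinearIndependent.of_comp _ hindep
      exact hfam.fintype_card_le_finrank
    have h2 : Module.finrank F U ≤ 2 * k := by
      refine (finrank_range_le_card v).trans ?_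
      simp only [Fintype.card_sum, Fintype.card_coe]
      omega
    omega
  have hNatCard : Nat.card {a : σ // h a ≠ 0} = Fintype.card {a : σ // h a ≠ 0} :=
    Nat.card_eq_fintype_card
  rw [hNatCard] at hsupp
  omega

section Expand
variable (F : Type*) [Field F] {n : ℕ}

local notation "V" => Fin n → F
local notation "W3" => (Fin n → F) → (Fin n → F) → (Fin n → F) → F

/-- monomial in three vector variables -/
def mono3 (t : (Fin n → ℕ) × (Fin n → ℕ) × (Fin n → ℕ)) : W3 :=
  fun x y z => (∏ i, x i ^ t.1 i) * (∏ i, y i ^ t.2.1 i) * (∏ i, z i ^ t.2.2 i)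

variable {F}

lemma prod_pow_single (x : V) (j : Fin n) (a : ℕ) :
    ∏ i, x i ^ Pi.single j a i = x j ^ a := by
  classical
  rw [Finset.prod_eq_single j]
  · simp
  · intro i _ hij; simp [Pi.single_eq_of_ne hij]
  · simp

lemma mono3_add (t s : (Fin n → ℕ) × (Fin n → ℕ) × (Fin n → ℕ)) :
    mono3 F (t + s) = mono3 F t * mono3 F s := by
  funext x y z
  simp only [mono3, Pi.mul_apply, Prod.fst_add, Prod.snd_add, Pi.add_apply, pow_add,
    Finset.prod_mul_distrib]
  ring

lemma mono3_single_eval (j : Fin n) (a b c : ℕ) (x y z : V) :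
    mono3 F (Pi.single j a, Pi.single j b, Pi.single j c) x y z = x j ^ a * y j ^ b * z j ^ c := by
  simp [mono3, prod_pow_single]

/-- scalar trinomial expansion -/
lemma trinomial (u v t : F) (m : ℕ) :
    (u + v + t) ^ m = ∑ k ∈ range (m+1), ∑ l ∈ range (k+1),
      ((m.choose k : F) * (k.choose l : F)) * (u ^ l * v ^ (k - l) * t ^ (m - k)) := by
  rw [add_pow]
  refine Finset.sum_congr rfl fun k _ => ?_
  rw [add_pow, Finset.sum_mul, Finset.sum_mul]
  refine Finset.sum_congr rfl fun l _ => ?_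
  ring

/-- Step A: the one-coordinate factor lies in the span of single-coordinate monomials. -/
lemma factor_mem_span (m : ℕ) (j : Fin n) :
    (fun x y z : V => 1 - (x j + y j + z j) ^ m) ∈ Submodule.span F
      {w : W3 | ∃ a b c : ℕ, a + b + c ≤ m ∧
        w = mono3 F (Pi.single j a, Pi.single j b, Pi.single j c)} := by
  have h1 : (fun _ _ _ : V => (1 : F)) ∈ Submodule.span F
      {w : W3 | ∃ a b c : ℕ, a + b + c ≤ m ∧
        w = mono3 F (Pi.single j a, Pi.single j b, Pi.single j c)} := by
    apply Submodule.subset_span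
    exact ⟨0, 0, 0, by omega, by funext x y z; simp [mono3]⟩
  have h2 : (fun x y z : V => (x j + y j + z j) ^ m) ∈ Submodule.span F
      {w : W3 | ∃ a b c : ℕ, a + b + c ≤ m ∧
        w = mono3 F (Pi.single j a, Pi.single j b, Pi.single j c)} := by
    have heq : (fun x y z : V => (x j + y j + z j) ^ m) =
        ∑ k ∈ range (m+1), ∑ l ∈ range (k+1),
          ((m.choose k : F) * (k.choose l : F)) •
            mono3 F (Pi.single j l, Pi.single j (k - l), Pi.single j (m - k)) := by
      funext x y z
      rw [Finset.sum_apply, Finset.sum_apply, Finset.sum_apply]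
      simp only [Finset.sum_apply, Pi.smul_apply, smul_eq_mul, mono3_single_eval]
      exact trinomial _ _ _ m
    rw [heq]
    refine Submodule.sum_mem _ fun k hk => Submodule.sum_mem _ fun l hl => ?_
    refine Submodule.smul_mem _ _ (Submodule.subset_span ?_)
    refine ⟨l, k - l, m - k, ?_, rfl⟩
    simp only [Finset.mem_range] at hk hl
    omega
  have : (fun x y z : V => 1 - (x j + y j + z j) ^ m) =
      (fun _ _ _ : V => (1:F)) - (fun x y z : V => (x j + y j + z j) ^ m) := rfl
  rw [this]
  exact Submodule.sub_mem _ h1 h2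


lemma prod_mem_span (m : ℕ) (s : Finset (Fin n)) :
    (fun x y z : V => ∏ j ∈ s, (1 - (x j + y j + z j) ^ m)) ∈ Submodule.span F
      {w : W3 | ∃ t, (∀ i ∈ s, t.1 i + t.2.1 i + t.2.2 i ≤ m) ∧
        (∀ i ∉ s, t.1 i = 0 ∧ t.2.1 i = 0 ∧ t.2.2 i = 0) ∧ w = mono3 F t} := by
  classical
  induction s using Finset.induction_on with
  | empty =>
    apply Submodule.subset_span
    refine ⟨(0, 0, 0), by simp, by simp, ?_⟩
    funext x y z; simp [mono3]
  | insert j s hjs ih =>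
    have heq : (fun x y z : V => ∏ i ∈ insert j s, (1 - (x i + y i + z i) ^ m)) =
        (fun x y z : V => 1 - (x j + y j + z j) ^ m) *
          (fun x y z : V => ∏ i ∈ s, (1 - (x i + y i + z i) ^ m)) := by
      funext x y z
      simp only [Pi.mul_apply]
      rw [Finset.prod_insert hjs]
    rw [heq]
    have hmul := Submodule.mul_mem_mul (factor_mem_span (F := F) m j) ih
    rw [Submodule.span_mul_span] at hmul
    refine Submodule.span_le.2 ?_ hmul
    rintro w hw
    rw [Set.mem_mul] at hw
    obtain ⟨w1, hw1, w2, hw2, rfl⟩ := hw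
    obtain ⟨a, b, c, habc, rfl⟩ := hw1
    obtain ⟨t, ht1, ht2, rfl⟩ := hw2
    refine Submodule.subset_span ⟨(Pi.single j a, Pi.single j b, Pi.single j c) + t, ?_, ?_, ?_⟩
    · intro i hi
      rcases Finset.mem_insert.1 hi with rfl | his
      · obtain ⟨h1, h2, h3⟩ := ht2 i hjs
        simp [Prod.fst_add, Prod.snd_add, Pi.add_apply, Pi.single_eq_same, h1, h2, h3]
        omega
      · have hij : i ≠ j := fun hh => hjs (hh ▸ his)
        simp only [Prod.fst_add, Prod.snd_add, Pi.add_apply, Pi.single_eq_of_ne hij]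
        have := ht1 i his
        omega
    · intro i hi
      have hij : i ≠ j := fun hh => hi (hh ▸ Finset.mem_insert_self j s)
      have his : i ∉ s := fun hh => hi (Finset.mem_insert_of_mem hh)
      obtain ⟨h1, h2, h3⟩ := ht2 i his
      simp [Prod.fst_add, Prod.snd_add, Pi.add_apply, Pi.single_eq_of_ne hij, h1, h2, h3]
    · rw [mono3_add]

lemma T_mem_span (m : ℕ) :
    (fun x y z : V => ∏ j, (1 - (x j + y j + z j) ^ m)) ∈ Submodule.span F
      {w : W3 | ∃ t : (Fin n → ℕ) × (Fin n → ℕ) × (Fin n → ℕ),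
        (∀ i, t.1 i + t.2.1 i + t.2.2 i ≤ m) ∧ w = mono3 F t} := by
  refine Submodule.span_mono ?_ (prod_mem_span m Finset.univ)
  rintro w ⟨t, ht1, _, rfl⟩
  exact ⟨t, fun i => ht1 i (Finset.mem_univ i), rfl⟩

variable (F) in
noncomputable def L1 (A : Finset (Fin n → ℕ)) : ((Fin n → ℕ) → V → V → F) →ₗ[F] W3 where
  toFun G := fun x y z => ∑ α ∈ A, (∏ i, x i ^ α i) * G α y z
  map_add' G H := by funext x y z; simp [Pi.add_apply, mul_add, Finset.sum_add_distrib]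
  map_smul' c G := by
    funext x y z
    simp only [Pi.smul_apply, smul_eq_mul, RingHom.id_apply, Finset.mul_sum]
    exact Finset.sum_congr rfl fun α _ => by ring

variable (F) in
noncomputable def L2 (A : Finset (Fin n → ℕ)) : ((Fin n → ℕ) → V → V → F) →ₗ[F] W3 where
  toFun G := fun x y z => ∑ β ∈ A, (∏ i, y i ^ β i) * G β x z
  map_add' G H := by funext x y z; simp [Pi.add_apply, mul_add, Finset.sum_add_distrib]
  map_smul' c G := by
    funext x y z
    simp only [Pi.smul_apply, smul_eq_mul, RingHom.id_apply, Finset.mul_sum]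
    exact Finset.sum_congr rfl fun α _ => by ring

variable (F) in
noncomputable def L3 (A : Finset (Fin n → ℕ)) : ((Fin n → ℕ) → V → V → F) →ₗ[F] W3 where
  toFun G := fun x y z => ∑ γ ∈ A, (∏ i, z i ^ γ i) * G γ x y
  map_add' G H := by funext x y z; simp [Pi.add_apply, mul_add, Finset.sum_add_distrib]
  map_smul' c G := by
    funext x y z
    simp only [Pi.smul_apply, smul_eq_mul, RingHom.id_apply, Finset.mul_sum]
    exact Finset.sum_congr rfl fun α _ => by ring

lemma T_repr (m : ℕ) (A : Finset (Fin n → ℕ))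
    (HA : ∀ t : (Fin n → ℕ) × (Fin n → ℕ) × (Fin n → ℕ),
      (∀ i, t.1 i + t.2.1 i + t.2.2 i ≤ m) → t.1 ∈ A ∨ t.2.1 ∈ A ∨ t.2.2 ∈ A) :
    ∃ G1 G2 G3 : (Fin n → ℕ) → V → V → F, ∀ x y z : V,
      ∏ j, (1 - (x j + y j + z j) ^ m) =
        (∑ α ∈ A, (∏ i, x i ^ α i) * G1 α y z) +
        ((∑ β ∈ A, (∏ i, y i ^ β i) * G2 β x z) +
        (∑ γ ∈ A, (∏ i, z i ^ γ i) * G3 γ x y)) := by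
  classical
  have hle : Submodule.span F {w : W3 | ∃ t : (Fin n → ℕ) × (Fin n → ℕ) × (Fin n → ℕ),
      (∀ i, t.1 i + t.2.1 i + t.2.2 i ≤ m) ∧ w = mono3 F t} ≤
      LinearMap.range (L1 F A) ⊔ (LinearMap.range (L2 F A) ⊔ LinearMap.range (L3 F A)) := by
    rw [Submodule.span_le]
    rintro w ⟨t, ht, rfl⟩
    rcases HA t ht with h | h | h
    · refine Submodule.mem_sup_left ⟨fun α y z =>
        if α = t.1 then (∏ i, y i ^ t.2.1 i) * (∏ i, z i ^ t.2.2 i) else 0, ?_⟩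
      funext x y z
      show (∑ α ∈ A, (∏ i, x i ^ α i) * _) = _
      rw [Finset.sum_eq_single t.1]
      · simp [mono3, mul_assoc]
      · intro α _ hne; simp [hne]
      · intro hne; exact absurd h hne
    · refine Submodule.mem_sup_right (Submodule.mem_sup_left ⟨fun β x z =>
        if β = t.2.1 then (∏ i, x i ^ t.1 i) * (∏ i, z i ^ t.2.2 i) else 0, ?_⟩)
      funext x y z
      show (∑ β ∈ A, (∏ i, y i ^ β i) * _) = _
      rw [Finset.sum_eq_single t.2.1]
      · simp [mono3]; ring
      · intro α _ hne; simp [hne]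
      · intro hne; exact absurd h hne
    · refine Submodule.mem_sup_right (Submodule.mem_sup_right ⟨fun γ x y =>
        if γ = t.2.2 then (∏ i, x i ^ t.1 i) * (∏ i, y i ^ t.2.1 i) else 0, ?_⟩)
      funext x y z
      show (∑ γ ∈ A, (∏ i, z i ^ γ i) * _) = _
      rw [Finset.sum_eq_single t.2.2]
      · simp [mono3]; ring
      · intro α _ hne; simp [hne]
      · intro hne; exact absurd h hne
  have hT := hle (T_mem_span m)
  rw [Submodule.mem_sup] at hT
  obtain ⟨w1, ⟨G1, rfl⟩, w23, hw23, hsum⟩ := hT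
  rw [Submodule.mem_sup] at hw23
  obtain ⟨w2, ⟨G2, rfl⟩, w3, ⟨G3, rfl⟩, rfl⟩ := hw23
  refine ⟨G1, G2, G3, fun x y z => ?_⟩
  have := congrFun (congrFun (congrFun hsum x) y) z
  exact this.symm

end Expand

open Pointwise

set_option maxHeartbeats 1600000 in
theorem card_le_of_no_three_term_ap (q n : ℕ) (hq : IsPrimePow q) (hn : 0 < n)
    (F : Type*) [Field F] [Fintype F] (hF : Fintype.card F = q)
    (S : Set (Fin n → F))
    (hS : ∀ a ∈ S, ∀ b ∈ S, ∀ c ∈ S, a + c = 2 • b → a = b ∧ b = c) :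
    Nat.card S ≤ Mbound q n := by
  classical
  have hq2 : 2 ≤ q := hq.two_le
  set m := q - 1 with hm
  have hm1 : 1 ≤ m := by omega
  haveI : Fintype ↥S := Set.Finite.fintype (Set.toFinite S)
  set d : ℝ := ((q : ℝ) - 1) * n / 3 with hd
  set A : Finset (Fin n → ℕ) :=
    (Fintype.piFinset fun _ : Fin n => Finset.range q).filter
      (fun a => ((∑ i, a i : ℕ) : ℝ) ≤ d) with hA
  have hmem : ∀ a : Fin n → ℕ, a ∈ A ↔ (∀ i, a i < q) ∧ ((∑ i, a i : ℕ) : ℝ) ≤ d := by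
    intro a
    simp [hA, Fintype.mem_piFinset, Finset.mem_range]
  have hcount : mCount q n d = A.card := by
    rw [mCount, Nat.card_congr (Equiv.subtypeEquivRight (q := fun a => a ∈ A)
      (fun a => by
        show _ ↔ a ∈ A
        rw [hmem a]
        constructor
        · rintro ⟨h1, h2⟩; exact ⟨fun i => by have := h1 i; omega, h2⟩
        · rintro ⟨h1, h2⟩; exact ⟨fun i => by have := h1 i; omega, h2⟩))]
    rw [Nat.card_eq_fintype_card, Fintype.card_coe]
  have hP : ∀ v : Fin n → F, (∏ j, (1 - (v j) ^ m)) = if v = 0 then 1 else 0 := by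
    intro v
    by_cases hv : v = 0
    · subst hv
      rw [if_pos rfl]
      have : (0:F) ^ m = 0 := zero_pow (by omega)
      simp [this]
    · rw [if_neg hv]
      obtain ⟨i, hi⟩ := Function.ne_iff.1 hv
      apply Finset.prod_eq_zero (Finset.mem_univ i)
      have h1 : v i ^ m = 1 := by
        have := FiniteField.pow_card_sub_one_eq_one (v i) (by simpa using hi)
        rwa [hF] at this
      rw [h1, sub_self]
  -- the diagonal tensor on S
  set T : ↥S → ↥S → ↥S → F := fun a b c =>
    ∏ j, (1 - ((↑a : Fin n → F) j + (-(↑b + ↑b) : Fin n → F) j + (↑c : Fin n → F) j) ^ m)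
    with hT
  have hdiag : ∀ a b c : ↥S, T a b c = if a = b ∧ b = c then 1 else 0 := by
    intro a b c
    set w : Fin n → F := ↑a + (-(↑b + ↑b)) + ↑c with hw
    have h1 : T a b c = ∏ j, (1 - (w j) ^ m) := by
      refine Finset.prod_congr rfl fun j _ => ?_
      simp [hw]
    have h2 : w = 0 ↔ (↑a : Fin n → F) + ↑c = 2 • (↑b : Fin n → F) := by
      rw [two_nsmul]
      constructor
      · intro h
        have : (↑a : Fin n → F) + ↑c - (↑b + ↑b) = 0 := by rw [← h, hw]; abel
        exact sub_eq_zero.1 this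
      · intro h
        rw [hw]
        have : (↑a : Fin n → F) + (-(↑b + ↑b)) + ↑c = ↑a + ↑c - (↑b + ↑b) := by abel
        rw [this, h, sub_self]
    rw [h1, hP w]
    by_cases hcase : a = b ∧ b = c
    · obtain ⟨rfl, rfl⟩ := hcase
      rw [if_pos, if_pos ⟨rfl, rfl⟩]
      rw [h2, two_nsmul]
    · rw [if_neg hcase, if_neg]
      intro h0
      have := hS ↑a a.2 ↑b b.2 ↑c c.2 (h2.1 h0)
      exact hcase ⟨Subtype.ext this.1, Subtype.ext this.2⟩
  have HA : ∀ t : (Fin n → ℕ) × (Fin n → ℕ) × (Fin n → ℕ),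
      (∀ i, t.1 i + t.2.1 i + t.2.2 i ≤ m) → t.1 ∈ A ∨ t.2.1 ∈ A ∨ t.2.2 ∈ A := by
    intro t ht
    have hlt : ∀ i, t.1 i < q ∧ t.2.1 i < q ∧ t.2.2 i < q := by
      intro i; have := ht i; omega
    by_contra hcon
    push_neg at hcon
    obtain ⟨h1, h2, h3⟩ := hcon
    rw [hmem] at h1 h2 h3
    push_neg at h1 h2 h3
    have d1 := h1 (fun i => (hlt i).1)
    have d2 := h2 (fun i => (hlt i).2.1)
    have d3 := h3 (fun i => (hlt i).2.2)
    have hsum : (∑ i, t.1 i) + (∑ i, t.2.1 i) + (∑ i, t.2.2 i) ≤ n * m := by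
      have : ∑ i, (t.1 i + t.2.1 i + t.2.2 i) ≤ ∑ _i : Fin n, m :=
        Finset.sum_le_sum fun i _ => ht i
      simp only [Finset.sum_add_distrib, Finset.sum_const, Finset.card_univ,
        Fintype.card_fin, smul_eq_mul] at this ⊢
      omega
    have hc := (Nat.cast_le (α := ℝ)).2 hsum
    rw [hm] at hc
    push_cast [Nat.cast_sub (show 1 ≤ q by omega)] at hc d1 d2 d3
    have h3d : (n : ℝ) * ((q : ℝ) - 1) = 3 * d := by rw [hd]; ring
    linarith
  obtain ⟨G1, G2, G3, hrepr⟩ := T_repr (F := F) (n := n) m A HA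
  have hrep : ∀ a b c : ↥S, T a b c =
      (∑ α ∈ A, (∏ i, (↑a : Fin n → F) i ^ α i) * G1 α (-(↑b + ↑b)) ↑c) +
      ((∑ β ∈ A, (∏ i, (-(↑b + ↑b) : Fin n → F) i ^ β i) * G2 β ↑a ↑c) +
       (∑ γ ∈ A, (∏ i, (↑c : Fin n → F) i ^ γ i) * G3 γ ↑a (-(↑b + ↑b)))) := by
    intro a b c
    rw [hT]
    exact hrepr ↑a (-(↑b + ↑b)) ↑c
  have key := key_count A T hdiag
    (fun a α => ∏ i, (↑a : Fin n → F) i ^ α i)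
    (fun b β => ∏ i, (-(↑b + ↑b) : Fin n → F) i ^ β i)
    (fun c γ => ∏ i, (↑c : Fin n → F) i ^ γ i)
    (fun α b c => G1 α (-(↑b + ↑b)) ↑c)
    (fun β a c => G2 β ↑a ↑c)
    (fun γ a b => G3 γ ↑a (-(↑b + ↑b)))
    hrep
  rw [Nat.card_eq_fintype_card, Mbound, hcount]
  exact key
end

section
/- Let q be a prime power, n a positive integer, and let S, T be subsets of F_q^n of the same cardinality N, enumerated as s_1, …, s_N and t_1, …, t_N, such that the equation s_i + t_i = s_j + t_k holds only when (j, k) = (i, i). Then N ≤ M(F_q^n). -/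
open Pointwise

-- Auxiliary material


open Finset

/-- Index set of exponent triples for one variable. -/
def T1 (q : ℕ) : Finset (ℕ × ℕ × ℕ) :=
  ((Finset.range q) ×ˢ (Finset.range q) ×ˢ (Finset.range q)).filter
    (fun p => p.1 + p.2.1 + p.2.2 ≤ q - 1)

lemma expand1 (F : Type*) [CommRing F] (q : ℕ) (hq : 1 ≤ q) :
    ∃ g : ℕ × ℕ × ℕ → F, ∀ x y z : F,
      1 - (x + y + z) ^ (q - 1) =
        ∑ p ∈ T1 q, g p * (x ^ p.1 * (y ^ p.2.1 * z ^ p.2.2)) := by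
  classical
  set m := q - 1 with hm
  have hmq : m < q := by omega
  refine ⟨fun p => (if p = (0,0,0) then 1 else 0)
    - (if p.1 + p.2.1 + p.2.2 = m then (((m.choose p.1) * ((m - p.1).choose p.2.1) : ℕ) : F) else 0),
    fun x y z => ?_⟩
  have hsplit : ∑ p ∈ T1 q, ((if p = (0,0,0) then (1:F) else 0)
      - (if p.1 + p.2.1 + p.2.2 = m then (((m.choose p.1) * ((m - p.1).choose p.2.1) : ℕ) : F) else 0))
        * (x ^ p.1 * (y ^ p.2.1 * z ^ p.2.2))
      = (∑ p ∈ T1 q, (if p = (0,0,0) then (1:F) else 0) * (x ^ p.1 * (y ^ p.2.1 * z ^ p.2.2)))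
      - ∑ p ∈ T1 q, (if p.1 + p.2.1 + p.2.2 = m then (((m.choose p.1) * ((m - p.1).choose p.2.1) : ℕ) : F) else 0) * (x ^ p.1 * (y ^ p.2.1 * z ^ p.2.2)) := by
    rw [← Finset.sum_sub_distrib]
    exact Finset.sum_congr rfl fun p _ => (sub_mul _ _ _)
  rw [hsplit]
  congr 1
  · rw [Finset.sum_eq_single_of_mem ((0,0,0) : ℕ × ℕ × ℕ)]
    · simp
    · simp [T1]; omega
    · intro b _ hb; rw [if_neg hb, zero_mul]
  · simp only [ite_mul, zero_mul]
    rw [← Finset.sum_filter]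
    have hexp : (x + y + z) ^ m = ∑ k ∈ range (m+1), ∑ j ∈ range (m - k + 1),
        (((m.choose k) * ((m - k).choose j) : ℕ) : F) * (x ^ k * (y ^ j * z ^ (m - k - j))) := by
      rw [add_assoc, add_pow]
      refine Finset.sum_congr rfl fun k hk => ?_
      rw [add_pow]
      simp only [Finset.mul_sum, Finset.sum_mul]
      exact Finset.sum_congr rfl fun j _ => by push_cast; ring
    rw [hexp, Finset.sum_sigma']
    refine Finset.sum_nbij' (fun p => (p.1, p.2, m - p.1 - p.2)) (fun p => ⟨p.1, p.2.1⟩) ?_ ?_ ?_ ?_ ?_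
    · intro a ha
      simp only [Finset.mem_sigma, Finset.mem_range] at ha
      simp only [T1, Finset.mem_filter, Finset.mem_product, Finset.mem_range]
      omega
    · intro a ha
      simp only [T1, Finset.mem_filter, Finset.mem_product, Finset.mem_range] at ha
      simp only [Finset.mem_sigma, Finset.mem_range]
      omega
    · intro a ha; rfl
    · intro a ha
      simp only [T1, Finset.mem_filter, Finset.mem_product, Finset.mem_range] at ha
      have : m - a.1 - a.2.1 = a.2.2 := by omega
      simp [this]
    · intro a ha
      simp only [Finset.mem_sigma, Finset.mem_range] at ha
      have h2 : a.1 + a.2 + (m - a.1 - a.2) = m := by omega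
      simp only [h2, if_pos rfl]

open Finset in
/-- The set of admissible monomial exponent vectors. -/
noncomputable def Mono (q n : ℕ) : Finset (Fin n → ℕ) :=
  (Fintype.piFinset fun _ => Finset.range q).filter
    (fun a => ((∑ i, a i : ℕ) : ℝ) ≤ ((q : ℝ) - 1) * n / 3)

open Finset in
lemma decomp (q n : ℕ) (hq : 1 ≤ q) (F : Type*) [CommRing F] :
    ∃ FA GB HC : (Fin n → ℕ) → (Fin n → F) → (Fin n → F) → F,
      ∀ x y z : Fin n → F,
        (∏ l, (1 - (x l + y l + z l) ^ (q - 1))) =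
          (∑ a ∈ Mono q n, (∏ l, x l ^ a l) * FA a y z)
        + (∑ b ∈ Mono q n, (∏ l, y l ^ b l) * GB b x z)
        + (∑ c ∈ Mono q n, (∏ l, z l ^ c l) * HC c x y) := by
  classical
  obtain ⟨g, hg⟩ := expand1 F q hq
  set D : ℝ := ((q : ℝ) - 1) * n / 3 with hD
  set S : Finset (Fin n → ℕ × ℕ × ℕ) := Fintype.piFinset (fun _ => T1 q) with hS
  set p1 : (Fin n → ℕ × ℕ × ℕ) → Prop := fun A => ((∑ l, (A l).1 : ℕ) : ℝ) ≤ D with hp1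
  set p2 : (Fin n → ℕ × ℕ × ℕ) → Prop := fun A => ((∑ l, (A l).2.1 : ℕ) : ℝ) ≤ D with hp2
  set S1 := S.filter p1 with hS1
  set S2 := (S.filter fun A => ¬ p1 A).filter p2 with hS2
  set S3 := (S.filter fun A => ¬ p1 A).filter (fun A => ¬ p2 A) with hS3
  -- basic facts about members of S
  have hmemS : ∀ A ∈ S, ∀ l, (A l).1 < q ∧ (A l).2.1 < q ∧ (A l).2.2 < q ∧
      (A l).1 + (A l).2.1 + (A l).2.2 ≤ q - 1 := by
    intro A hA l
    have := Fintype.mem_piFinset.1 hA l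
    simp only [T1, Finset.mem_filter, Finset.mem_product, Finset.mem_range] at this
    exact ⟨this.1.1, this.1.2.1, this.1.2.2, this.2⟩
  have hcast : ((q - 1 : ℕ) : ℝ) = (q : ℝ) - 1 := by
    push_cast [hq]; ring
  have h3D : ((q : ℝ) - 1) * n = 3 * D := by rw [hD]; ring
  have key1 : ∀ A ∈ S1, (fun l => (A l).1) ∈ Mono q n := by
    intro A hA
    rw [hS1, Finset.mem_filter] at hA
    simp only [Mono, Finset.mem_filter, Fintype.mem_piFinset, Finset.mem_range]
    exact ⟨fun l => (hmemS A hA.1 l).1, hA.2⟩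
  have key2 : ∀ A ∈ S2, (fun l => (A l).2.1) ∈ Mono q n := by
    intro A hA
    rw [hS2, Finset.mem_filter, Finset.mem_filter] at hA
    simp only [Mono, Finset.mem_filter, Fintype.mem_piFinset, Finset.mem_range]
    exact ⟨fun l => (hmemS A hA.1.1 l).2.1, hA.2⟩
  have key3 : ∀ A ∈ S3, (fun l => (A l).2.2) ∈ Mono q n := by
    intro A hA
    rw [hS3, Finset.mem_filter, Finset.mem_filter] at hA
    obtain ⟨⟨hAS, hnp1⟩, hnp2⟩ := hA
    simp only [Mono, Finset.mem_filter, Fintype.mem_piFinset, Finset.mem_range]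
    refine ⟨fun l => (hmemS A hAS l).2.2.1, ?_⟩
    have hsum : (∑ l, (A l).1) + (∑ l, (A l).2.1) + (∑ l, (A l).2.2) ≤ (q - 1) * n := by
      rw [← Finset.sum_add_distrib, ← Finset.sum_add_distrib]
      calc ∑ l, ((A l).1 + (A l).2.1 + (A l).2.2) ≤ ∑ _l : Fin n, (q - 1) :=
            Finset.sum_le_sum fun l _ => (hmemS A hAS l).2.2.2
        _ = (q - 1) * n := by
            rw [Finset.sum_const, Finset.card_univ, Fintype.card_fin, smul_eq_mul, mul_comm]
    have hsumR : ((∑ l, (A l).1 : ℕ) : ℝ) + ((∑ l, (A l).2.1 : ℕ) : ℝ)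
        + ((∑ l, (A l).2.2 : ℕ) : ℝ) ≤ 3 * D := by
      rw [← h3D, ← hcast]
      push_cast
      exact_mod_cast Nat.cast_le.2 hsum
    rw [hp1] at hnp1
    rw [hp2] at hnp2
    push_neg at hnp1 hnp2
    linarith
  have hterm : ∀ (x y z : Fin n → F) (A : Fin n → ℕ × ℕ × ℕ),
      (∏ l, (g (A l) * (x l ^ (A l).1 * (y l ^ (A l).2.1 * z l ^ (A l).2.2))))
        = (∏ l, x l ^ (A l).1) * ((∏ l, y l ^ (A l).2.1) *
            ((∏ l, z l ^ (A l).2.2) * (∏ l, g (A l)))) := by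
    intro x y z A
    rw [Finset.prod_mul_distrib]
    rw [show (fun l => x l ^ (A l).1 * (y l ^ (A l).2.1 * z l ^ (A l).2.2))
        = fun l => x l ^ (A l).1 * (y l ^ (A l).2.1 * z l ^ (A l).2.2) from rfl]
    rw [Finset.prod_mul_distrib, Finset.prod_mul_distrib]
    ring
  refine ⟨fun a y z => ∑ A ∈ S1.filter (fun A => (fun l => (A l).1) = a),
      (∏ l, y l ^ (A l).2.1) * ((∏ l, z l ^ (A l).2.2) * (∏ l, g (A l))),
    fun b x z => ∑ A ∈ S2.filter (fun A => (fun l => (A l).2.1) = b),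
      (∏ l, x l ^ (A l).1) * ((∏ l, z l ^ (A l).2.2) * (∏ l, g (A l))),
    fun c x y => ∑ A ∈ S3.filter (fun A => (fun l => (A l).2.2) = c),
      (∏ l, x l ^ (A l).1) * ((∏ l, y l ^ (A l).2.1) * (∏ l, g (A l))), fun x y z => ?_⟩
  have step1 : (∏ l, (1 - (x l + y l + z l) ^ (q - 1)))
      = ∑ A ∈ S, ∏ l, (g (A l) * (x l ^ (A l).1 * (y l ^ (A l).2.1 * z l ^ (A l).2.2))) := by
    rw [Finset.prod_congr rfl fun l _ => hg (x l) (y l) (z l)]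
    exact Finset.prod_univ_sum _ _
  rw [step1]
  rw [← Finset.sum_filter_add_sum_filter_not S p1, ← hS1,
      ← Finset.sum_filter_add_sum_filter_not (S.filter fun A => ¬ p1 A) p2, ← hS2, ← hS3]
  have eq1 : ∑ A ∈ S1, ∏ l, (g (A l) * (x l ^ (A l).1 * (y l ^ (A l).2.1 * z l ^ (A l).2.2)))
      = ∑ a ∈ Mono q n, (∏ l, x l ^ a l) * ∑ A ∈ S1.filter (fun A => (fun l => (A l).1) = a),
          (∏ l, y l ^ (A l).2.1) * ((∏ l, z l ^ (A l).2.2) * (∏ l, g (A l))) := by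
    rw [← Finset.sum_fiberwise_of_maps_to key1]
    refine Finset.sum_congr rfl fun a _ => ?_
    rw [Finset.mul_sum]
    refine Finset.sum_congr rfl fun A hA => ?_
    have ha : (fun l => (A l).1) = a := (Finset.mem_filter.1 hA).2
    rw [hterm x y z A, ← ha]
  have eq2 : ∑ A ∈ S2, ∏ l, (g (A l) * (x l ^ (A l).1 * (y l ^ (A l).2.1 * z l ^ (A l).2.2)))
      = ∑ b ∈ Mono q n, (∏ l, y l ^ b l) * ∑ A ∈ S2.filter (fun A => (fun l => (A l).2.1) = b),
          (∏ l, x l ^ (A l).1) * ((∏ l, z l ^ (A l).2.2) * (∏ l, g (A l))) := by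
    rw [← Finset.sum_fiberwise_of_maps_to key2]
    refine Finset.sum_congr rfl fun b _ => ?_
    rw [Finset.mul_sum]
    refine Finset.sum_congr rfl fun A hA => ?_
    have hb : (fun l => (A l).2.1) = b := (Finset.mem_filter.1 hA).2
    rw [hterm x y z A, ← hb]
    ring
  have eq3 : ∑ A ∈ S3, ∏ l, (g (A l) * (x l ^ (A l).1 * (y l ^ (A l).2.1 * z l ^ (A l).2.2)))
      = ∑ c ∈ Mono q n, (∏ l, z l ^ c l) * ∑ A ∈ S3.filter (fun A => (fun l => (A l).2.2) = c),
          (∏ l, x l ^ (A l).1) * ((∏ l, y l ^ (A l).2.1) * (∏ l, g (A l))) := by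
    rw [← Finset.sum_fiberwise_of_maps_to key3]
    refine Finset.sum_congr rfl fun c _ => ?_
    rw [Finset.mul_sum]
    refine Finset.sum_congr rfl fun A hA => ?_
    have hc : (fun l => (A l).2.2) = c := (Finset.mem_filter.1 hA).2
    rw [hterm x y z A, ← hc]
    ring
  rw [eq1, eq2, eq3]
  ring


open Finset Module

lemma exists_big_support (K : Type*) [Field K] [DecidableEq K] {ι : Type*} [Fintype ι] [DecidableEq ι]
    (V : Submodule K (ι → K)) :
    ∃ h ∈ V, Module.finrank K V ≤ (Finset.univ.filter (fun i => h i ≠ 0)).card := by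
  classical
  set Supp : (ι → K) → Finset ι := fun h => Finset.univ.filter (fun i => h i ≠ 0) with hSupp
  set Sc : Set ℕ := {c | ∃ h ∈ V, (Supp h).card = c} with hSc
  have h0 : 0 ∈ Sc := ⟨0, V.zero_mem, by simp [hSupp]⟩
  have hbdd : BddAbove Sc := by
    refine ⟨Fintype.card ι, fun c hc => ?_⟩
    obtain ⟨h, _, rfl⟩ := hc
    exact (Finset.card_filter_le _ _).trans (by simp)
  have hmem := Nat.sSup_mem ⟨0, h0⟩ hbdd
  obtain ⟨h, hhV, hhcard⟩ := hmem
  refine ⟨h, hhV, ?_⟩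
  by_contra hlt
  push_neg at hlt
  rw [hhcard] at hlt
  -- restriction map
  set ρ : V →ₗ[K] (↥(Supp h) → K) := (LinearMap.funLeft K K Subtype.val).comp V.subtype with hρ
  have hrank := LinearMap.finrank_range_add_finrank_ker ρ
  have hrange : finrank K (LinearMap.range ρ) ≤ sSup Sc := by
    calc finrank K (LinearMap.range ρ) ≤ finrank K (↥(Supp h) → K) := (LinearMap.range ρ).finrank_le
      _ = (Supp h).card := by rw [Module.finrank_pi]; exact Fintype.card_coe _
      _ = sSup Sc := hhcard
  have hker : 0 < finrank K (LinearMap.ker ρ) := by omega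
  have : Nontrivial (LinearMap.ker ρ) := Module.nontrivial_of_finrank_pos hker
  obtain ⟨w, hw⟩ := exists_ne (0 : LinearMap.ker ρ)
  set w' : ι → K := (w.1 : ι → K) with hw'
  have hw'V : w' ∈ V := w.1.2
  have hw'0 : w' ≠ 0 := by
    intro hcon
    apply hw
    ext i
    exact congrFun hcon i
  have hw'supp : ∀ i ∈ Supp h, w' i = 0 := by
    intro i hi
    have := w.2
    rw [LinearMap.mem_ker] at this
    exact congrFun this ⟨i, hi⟩
  -- h + w' has strictly bigger support
  have hsub : Supp h ⊂ Supp (h + w') := by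
    constructor
    · intro i hi
      simp only [hSupp, Finset.mem_filter, Finset.mem_univ, true_and] at hi ⊢
      rw [Pi.add_apply, hw'supp i (by simp [hSupp, hi]), add_zero]
      exact hi
    · intro hcon
      obtain ⟨i, hi⟩ : ∃ i, w' i ≠ 0 := by
        by_contra hc; push_neg at hc; exact hw'0 (funext hc)
      have hih : h i = 0 := by
        by_contra hc
        exact hi (hw'supp i (by simp [hSupp, hc]))
      have : i ∈ Supp (h + w') := by
        simp [hSupp, hih, hi]
      have := hcon this
      simp [hSupp, hih] at this
  have hcard : (Supp (h + w')).card ∈ Sc := ⟨h + w', V.add_mem hhV hw'V, rfl⟩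
  have := le_csSup hbdd hcard
  have := Finset.card_lt_card hsub
  omega


lemma mCount_eq (q n : ℕ) (hq : 1 ≤ q) :
    mCount q n (((q : ℝ) - 1) * n / 3) = (Mono q n).card := by
  classical
  rw [mCount, ← Set.ncard_coe_finset]
  have hset : (↑(Mono q n) : Set (Fin n → ℕ))
      = {a : Fin n → ℕ | (∀ i, a i ≤ q - 1) ∧ ((∑ i, a i : ℕ) : ℝ) ≤ ((q : ℝ) - 1) * n / 3} := by
    ext a
    simp only [Finset.coe_filter, Mono, Set.mem_setOf_eq, Fintype.mem_piFinset, Finset.mem_range]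
    constructor
    · rintro ⟨h1, h2⟩; exact ⟨fun i => by have := h1 i; omega, h2⟩
    · rintro ⟨h1, h2⟩; exact ⟨fun i => by have := h1 i; omega, h2⟩
  rw [hset]
  exact (Nat.card_coe_set_eq _)

lemma delta_coord {F : Type*} [Field F] [Fintype F] [DecidableEq F] {q : ℕ} (hq2 : 2 ≤ q)
    (hF : Fintype.card F = q) (a : F) :
    1 - a ^ (q - 1) = if a = 0 then (1 : F) else 0 := by
  by_cases ha : a = 0
  · subst ha
    rw [zero_pow (by omega), if_pos rfl, sub_zero]
  · rw [if_neg ha, ← hF, FiniteField.pow_card_sub_one_eq_one a ha, sub_self]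

lemma delta_eval {F : Type*} [Field F] [Fintype F] [DecidableEq F] {q n : ℕ} (hq2 : 2 ≤ q)
    (hF : Fintype.card F = q) (v : Fin n → F) :
    (∏ l, (1 - v l ^ (q - 1))) = if v = 0 then (1 : F) else 0 := by
  classical
  by_cases hv : v = 0
  · subst hv
    simp [delta_coord hq2 hF]
  · rw [if_neg hv]
    obtain ⟨l, hl⟩ : ∃ l, v l ≠ 0 := by
      by_contra hc; push_neg at hc; exact hv (funext hc)
    exact Finset.prod_eq_zero (Finset.mem_univ l)
      (by rw [delta_coord hq2 hF, if_neg hl])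


theorem multicolored_sum_free_bound (q n : ℕ) (hq : IsPrimePow q) (hn : 0 < n)
    (F : Type*) [Field F] [Fintype F] (hF : Fintype.card F = q)
    (N : ℕ) (s t : Fin N → (Fin n → F))
    (hs : Function.Injective s) (ht : Function.Injective t)
    (h : ∀ i j k, s j + t k = s i + t i → j = i ∧ k = i) :
    N ≤ Mbound q n := by
  classical
  have hq2 : 2 ≤ q := hq.two_le
  have hq1 : 1 ≤ q := by omega
  obtain ⟨FA, GB, HC, hdec⟩ := decomp q n hq1 F
  set u : Fin N → (Fin n → F) := fun i => -(s i + t i) with hu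
  set m := (Mono q n).card with hm
  have hM : Mbound q n = 3 * m := by rw [Mbound, mCount_eq q n hq1]
  -- delta evaluation of the tensor
  have hdelta : ∀ j k i : Fin N, (∏ l, (1 - (s j l + t k l + u i l) ^ (q - 1)))
      = if j = i ∧ k = i then (1:F) else 0 := by
    intro j k i
    have e0 : (∏ l, (1 - (s j l + t k l + u i l) ^ (q - 1)))
        = (∏ l, (1 - ((s j + t k + u i) l) ^ (q - 1))) := rfl
    rw [e0, delta_eval hq2 hF]
    have hiff : s j + t k + u i = 0 ↔ (j = i ∧ k = i) := by
      constructor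
      · intro he
        refine h i j k ?_
        have he2 : s j + t k + -(s i + t i) = 0 := he
        exact add_neg_eq_zero.mp he2
      · rintro ⟨rfl, rfl⟩
        simp only [hu]
        abel
    simp only [hiff]
  -- the linear map whose kernel we use
  set Φ : (Fin N → F) →ₗ[F] (↥(Mono q n) → F) :=
    { toFun := fun c => fun a => ∑ j, c j * ∏ l, s j l ^ (a.1 l)
      map_add' := by
        intro c d
        funext a
        simp [add_mul, Finset.sum_add_distrib]
      map_smul' := by
        intro r c
        funext a
        simp [Finset.mul_sum, mul_assoc] } with hΦ
  have hVle : N ≤ m + Module.finrank F (LinearMap.ker Φ) := by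
    have h1 := LinearMap.finrank_range_add_finrank_ker Φ
    have h2 : Module.finrank F (Fin N → F) = N := by simp
    have h3 : Module.finrank F (LinearMap.range Φ) ≤ m := by
      calc Module.finrank F (LinearMap.range Φ) ≤ Module.finrank F (↥(Mono q n) → F) :=
            Submodule.finrank_le _
        _ = m := by rw [Module.finrank_pi, Fintype.card_coe, hm]
    omega
  obtain ⟨c, hcV, hcsupp⟩ := exists_big_support F (LinearMap.ker Φ)
  have hNm : N ≤ m + (Finset.univ.filter (fun j => c j ≠ 0)).card := by
    exact hVle.trans (by omega)
  have hker : ∀ a ∈ Mono q n, ∑ j, c j * ∏ l, s j l ^ (a l) = 0 := by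
    intro a ha
    have h0 := LinearMap.mem_ker.mp hcV
    exact congrFun h0 ⟨a, ha⟩
  -- key identity
  have hkey : ∀ k i : Fin N,
      c k * (if k = i then (1:F) else 0)
        = (∑ b ∈ Mono q n, (∏ l, t k l ^ b l) * (∑ j, c j * GB b (s j) (u i)))
        + (∑ e ∈ Mono q n, (∑ j, c j * HC e (s j) (t k)) * (∏ l, u i l ^ e l)) := by
    intro k i
    have lhs_eq : ∑ j, c j * (∏ l, (1 - (s j l + t k l + u i l) ^ (q - 1)))
        = c k * (if k = i then (1:F) else 0) := by
      rw [Finset.sum_congr rfl fun j _ => by rw [hdelta j k i]]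
      by_cases hk : k = i
      · subst hk
        simp [mul_ite, Finset.sum_ite_eq' Finset.univ k c]
      · simp [hk]
    have rhs_eq : ∑ j, c j * (∏ l, (1 - (s j l + t k l + u i l) ^ (q - 1)))
        = (∑ b ∈ Mono q n, (∏ l, t k l ^ b l) * (∑ j, c j * GB b (s j) (u i)))
        + (∑ e ∈ Mono q n, (∑ j, c j * HC e (s j) (t k)) * (∏ l, u i l ^ e l)) := by
      rw [Finset.sum_congr rfl fun j _ => by rw [hdec (s j) (t k) (u i)]]
      simp only [mul_add]
      rw [Finset.sum_add_distrib, Finset.sum_add_distrib]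
      have e1 : ∑ j, c j * (∑ a ∈ Mono q n, (∏ l, s j l ^ a l) * FA a (t k) (u i)) = 0 := by
        rw [Finset.sum_congr rfl fun j _ => Finset.mul_sum _ _ _, Finset.sum_comm]
        refine Finset.sum_eq_zero fun a ha => ?_
        have e1a : ∑ j, c j * ((∏ l, s j l ^ a l) * FA a (t k) (u i))
            = (∑ j, c j * ∏ l, s j l ^ a l) * FA a (t k) (u i) := by
          rw [Finset.sum_mul]
          exact Finset.sum_congr rfl fun j _ => by ring
        rw [e1a, hker a ha, zero_mul]
      have e2 : ∑ j, c j * (∑ b ∈ Mono q n, (∏ l, t k l ^ b l) * GB b (s j) (u i))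
          = ∑ b ∈ Mono q n, (∏ l, t k l ^ b l) * (∑ j, c j * GB b (s j) (u i)) := by
        rw [Finset.sum_congr rfl fun j _ => Finset.mul_sum _ _ _, Finset.sum_comm]
        refine Finset.sum_congr rfl fun b hb => ?_
        rw [Finset.mul_sum]
        exact Finset.sum_congr rfl fun j _ => by ring
      have e3 : ∑ j, c j * (∑ e ∈ Mono q n, (∏ l, u i l ^ e l) * HC e (s j) (t k))
          = ∑ e ∈ Mono q n, (∑ j, c j * HC e (s j) (t k)) * (∏ l, u i l ^ e l) := by
        rw [Finset.sum_congr rfl fun j _ => Finset.mul_sum _ _ _, Finset.sum_comm]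
        refine Finset.sum_congr rfl fun e he => ?_
        rw [Finset.sum_mul]
        exact Finset.sum_congr rfl fun j _ => by ring
      rw [e1, e2, e3, zero_add]
    rw [← lhs_eq, rhs_eq]
  -- span of the 2m functions
  set vfun : (↥(Mono q n) ⊕ ↥(Mono q n)) → (Fin N → F) :=
    Sum.elim (fun b => fun i => ∑ j, c j * GB b.1 (s j) (u i))
             (fun e => fun i => ∏ l, u i l ^ e.1 l) with hvfun
  set W := Submodule.span F (Set.range vfun) with hW
  have hWrank : Module.finrank F W ≤ 2 * m := by
    have h1 : Module.finrank F W ≤ (Set.range vfun).toFinset.card := finrank_span_le_card _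
    have h2 : (Set.range vfun).toFinset.card ≤ Fintype.card (↥(Mono q n) ⊕ ↥(Mono q n)) := by
      rw [Set.toFinset_card]
      exact Fintype.card_range_le _
    have h4 : Fintype.card (↥(Mono q n) ⊕ ↥(Mono q n))
        = Fintype.card ↥(Mono q n) + Fintype.card ↥(Mono q n) := Fintype.card_sum
    have h5 : Fintype.card ↥(Mono q n) = m := Fintype.card_coe _
    omega
  have hrowW : ∀ k : Fin N, (fun i => c k * (if k = i then (1:F) else 0)) ∈ W := by
    intro k
    have hrow : (fun i => c k * (if k = i then (1:F) else 0))
        = (∑ b ∈ (Mono q n).attach, (∏ l, t k l ^ b.1 l) • vfun (Sum.inl b))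
        + (∑ e ∈ (Mono q n).attach, (∑ j, c j * HC e.1 (s j) (t k)) • vfun (Sum.inr e)) := by
      funext i
      rw [Pi.add_apply]
      rw [hkey k i]
      congr 1
      · rw [Finset.sum_apply]
        rw [← Finset.sum_attach (Mono q n)
          (fun b => (∏ l, t k l ^ b l) * (∑ j, c j * GB b (s j) (u i)))]
        exact Finset.sum_congr rfl fun b _ => rfl
      · rw [Finset.sum_apply]
        rw [← Finset.sum_attach (Mono q n)
          (fun e => (∑ j, c j * HC e (s j) (t k)) * (∏ l, u i l ^ e l))]
        exact Finset.sum_congr rfl fun e _ => rfl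
    rw [hrow]
    refine W.add_mem ?_ ?_
    · exact Submodule.sum_mem _ fun b _ =>
        Submodule.smul_mem _ _ (Submodule.subset_span ⟨Sum.inl b, rfl⟩)
    · exact Submodule.sum_mem _ fun e _ =>
        Submodule.smul_mem _ _ (Submodule.subset_span ⟨Sum.inr e, rfl⟩)
  have hsingleW : ∀ k ∈ Finset.univ.filter (fun j => c j ≠ 0), Pi.single k (1:F) ∈ W := by
    intro k hk
    have hck : c k ≠ 0 := (Finset.mem_filter.1 hk).2
    have hmem := W.smul_mem (c k)⁻¹ (hrowW k)
    have heq : Pi.single k (1:F) = (c k)⁻¹ • (fun i => c k * (if k = i then (1:F) else 0)) := by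
      funext i
      rw [Pi.smul_apply, smul_eq_mul]
      by_cases hik : i = k
      · subst hik
        rw [Pi.single_eq_same, if_pos rfl, mul_one, inv_mul_cancel₀ hck]
      · rw [Pi.single_eq_of_ne hik, if_neg (fun hcon => hik hcon.symm), mul_zero, mul_zero]
    rw [heq]
    exact hmem
  have hcard : (Finset.univ.filter (fun j => c j ≠ 0)).card ≤ Module.finrank F W := by
    set Sup := Finset.univ.filter (fun j => c j ≠ 0) with hSup
    have li0 : LinearIndependent F (fun k : ↥Sup => (Pi.single (k : Fin N) (1:F) : Fin N → F)) := by
      have hb := (Pi.basisFun F (Fin N)).linearIndependent.comp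
        (Subtype.val : ↥Sup → Fin N) Subtype.val_injective
      have hfe : ((Pi.basisFun F (Fin N)) ∘ (Subtype.val : ↥Sup → Fin N))
          = fun k : ↥Sup => (Pi.single (k : Fin N) (1:F) : Fin N → F) := by
        funext k
        simp
      rwa [hfe] at hb
    have li : LinearIndependent F
        (fun k : ↥Sup => (⟨Pi.single (k : Fin N) (1:F), hsingleW k.1 k.2⟩ : W)) := by
      refine LinearIndependent.of_comp W.subtype ?_
      exact li0
    have hfc := li.fintype_card_le_finrank
    rwa [Fintype.card_coe] at hfc
  rw [hM]
  omega
end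

section
/- (Meshulam) Let k be a field, n a positive integer, and W a linear subspace of the space of n × n matrices over k. For each nonzero w ∈ W let p(w) ∈ {1,…,n} × {1,…,n} be the lexicographically first pair (i, j) such that the entry w_{ij} is nonzero, and let Σ be the set of all p(w) as w ranges over the nonzero elements of W. Suppose every matrix in W has rank at most r. Then there exist a set R of rows and a set C of columns with |R| + |C| ≤ r such that every element (i, j) of Σ satisfies i ∈ R or j ∈ C. -/
open Matrix Finset

section MeshulamAux

variable {k : Type*} [Field k] {n : ℕ}

/-- Given leading positions with strictly increasing rows and distinct columns,
some element of `W` has an invertible `m × m` submatrix on those rows/columns. -/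
private lemma meshulam_aux_det {m : ℕ} (W : Submodule k (Matrix (Fin n) (Fin n) k))
    (i : Fin m → Fin n) (hi : StrictMono i)
    (j : Fin m → Fin n) (hj : Function.Injective j)
    (w : Fin m → Matrix (Fin n) (Fin n) k) (hw : ∀ t, w t ∈ W)
    (hl : ∀ t, w t (i t) (j t) ≠ 0)
    (hv : ∀ t a b, toLex ((a, b) : Fin n × Fin n) < toLex (i t, j t) → w t a b = 0) :
    ∃ A ∈ W, (A.submatrix i j).det ≠ 0 := by
  classical
  have key : ∀ s : ℕ, s ≤ m → ∃ A ∈ W,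
      (Matrix.of fun t u : Fin m =>
        if (t : ℕ) < s then A (i t) (j u) else w t (i t) (j u)).det ≠ 0 := by
    intro s
    induction s with
    | zero =>
      intro _
      refine ⟨0, W.zero_mem, ?_⟩
      have hD : (Matrix.of fun t u : Fin m =>
          if (t : ℕ) < 0 then (0 : Matrix (Fin n) (Fin n) k) (i t) (j u)
          else w t (i t) (j u))
          = Matrix.of fun t u : Fin m => w t (i t) (j u) := by
        funext t u; simp
      rw [hD]
      set τ := Tuple.sort j with hτ
      have hjτ : StrictMono (j ∘ τ) :=
        (Tuple.monotone_sort j).strictMono_of_injective (hj.comp τ.injective)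
      rw [← Matrix.det_submatrix_equiv_self τ]
      have htri : ((Matrix.of fun t u : Fin m => w t (i t) (j u)).submatrix τ τ).BlockTriangular
          id := by
        intro a b hba
        have hjj : j (τ b) < j (τ a) := hjτ hba
        simp only [Matrix.submatrix_apply, Matrix.of_apply]
        refine hv (τ a) _ _ ?_
        rw [Prod.Lex.lt_iff]
        exact Or.inr ⟨rfl, hjj⟩
      rw [Matrix.det_of_upperTriangular htri]
      refine Finset.prod_ne_zero_iff.2 fun t _ => ?_
      simpa using hl (τ t)
    | succ s ih =>
      intro hs
      obtain ⟨A, hA, hdet⟩ := ih (Nat.le_of_succ_le hs)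
      set t₀ : Fin m := ⟨s, hs⟩ with ht₀
      set N : Matrix (Fin m) (Fin m) k := Matrix.of fun t u : Fin m =>
        if (t : ℕ) < s then A (i t) (j u) else w t (i t) (j u) with hNdef
      set rA : Fin m → k := fun u => A (i t₀) (j u) with hrA
      set rW : Fin m → k := fun u => w t₀ (i t₀) (j u) with hrW
      have hrow : N.updateRow t₀ rW = N := by
        have : rW = N t₀ := by
          funext u
          simp [hNdef, hrW, ht₀]
        rw [this, Matrix.updateRow_eq_self]
      set x : k := (1 - (N.updateRow t₀ rA).det) / N.det with hx
      refine ⟨A + x • w t₀, W.add_mem hA (W.smul_mem _ (hw t₀)), ?_⟩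
      have hmat : (Matrix.of fun t u : Fin m =>
          if (t : ℕ) < s + 1 then (A + x • w t₀) (i t) (j u) else w t (i t) (j u))
          = N.updateRow t₀ (rA + x • rW) := by
        funext t u
        by_cases ht : t = t₀
        · subst ht
          simp [hNdef, hrA, hrW, ht₀, Matrix.updateRow_self]
        · have ht' : (t : ℕ) ≠ s := fun h => ht (Fin.ext h)
          rw [Matrix.of_apply, Matrix.updateRow_ne ht]
          by_cases hlt : (t : ℕ) < s
          · have h1 : (t : ℕ) < s + 1 := Nat.lt_succ_of_lt hlt
            have hz : w t₀ (i t) (j u) = 0 := by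
              refine hv t₀ _ _ ?_
              rw [Prod.Lex.lt_iff]
              exact Or.inl (hi (show t < t₀ by
                rw [Fin.lt_def]; simpa [ht₀] using hlt))
            simp [h1, hlt, hNdef, hz]
          · have h1 : ¬ (t : ℕ) < s + 1 := by omega
            simp [h1, hlt, hNdef]
      rw [hmat, Matrix.det_updateRow_add, Matrix.det_updateRow_smul, hrow]
      have hone : (N.updateRow t₀ rA).det + x * N.det = 1 := by
        rw [hx, div_mul_cancel₀ _ hdet]
        ring
      rw [hone]
      exact one_ne_zero
  obtain ⟨A, hA, hdet⟩ := key m le_rfl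
  refine ⟨A, hA, ?_⟩
  have : (Matrix.of fun t u : Fin m =>
      if (t : ℕ) < m then A (i t) (j u) else w t (i t) (j u)) = A.submatrix i j := by
    funext t u
    simp [t.isLt]
  rwa [this] at hdet

/-- An invertible `m × m` submatrix forces rank at least `m`. -/
private lemma meshulam_card_le_rank {m : ℕ} (A : Matrix (Fin n) (Fin n) k)
    (i j : Fin m → Fin n) (hdet : (A.submatrix i j).det ≠ 0) : m ≤ A.rank := by
  classical
  have hunit : IsUnit (A.submatrix i j) :=
    (Matrix.isUnit_iff_isUnit_det _).2 (isUnit_iff_ne_zero.2 hdet)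
  have hsub : LinearIndependent k fun u : Fin m => (A.submatrix i j)ᵀ u :=
    Matrix.linearIndependent_cols_iff_isUnit.2 hunit
  have hcols : LinearIndependent k fun u : Fin m => Aᵀ (j u) := by
    rw [Fintype.linearIndependent_iff] at hsub ⊢
    intro g hg
    refine hsub g ?_
    funext t
    have := congrFun hg (i t)
    simpa [Finset.sum_apply] using this
  set p : Submodule k (Fin n → k) := Submodule.span k (Set.range Aᵀ) with hp
  have hmem : ∀ u : Fin m, Aᵀ (j u) ∈ p := fun u =>
    Submodule.subset_span ⟨j u, rfl⟩
  set v : Fin m → p := fun u => ⟨Aᵀ (j u), hmem u⟩ with hvdef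
  have hv : LinearIndependent k v := by
    refine LinearIndependent.of_comp p.subtype ?_
    convert hcols
    rfl
  have := hv.fintype_card_le_finrank
  rw [Fintype.card_fin] at this; rw [Matrix.rank_eq_finrank_span_cols]; exact this

end MeshulamAux

/-- **Meshulam's theorem on spaces of low-rank matrices.**  If every matrix in a linear
subspace `W` of `n × n` matrices has rank at most `r`, then there are a set `R` of rows and
a set `C` of columns with `|R| + |C| ≤ r` covering the leading (lexicographically first
nonzero) position of every nonzero matrix in `W`. -/
theorem meshulam_low_rank_cover (k : Type*) [Field k] (n : ℕ) (hn : 0 < n)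
    (W : Submodule k (Matrix (Fin n) (Fin n) k)) (r : ℕ)
    (hrank : ∀ w ∈ W, Matrix.rank w ≤ r) :
    ∃ R C : Finset (Fin n), R.card + C.card ≤ r ∧
      ∀ w ∈ W, w ≠ 0 → ∀ i j : Fin n,
        (w i j ≠ 0 ∧ ∀ i' j' : Fin n, w i' j' ≠ 0 →
          toLex ((i, j) : Fin n × Fin n) ≤ toLex (i', j')) →
        i ∈ R ∨ j ∈ C := by
  classical
  set E : Finset (Fin n × Fin n) := Finset.univ.filter (fun q => ∃ w ∈ W,
      w q.1 q.2 ≠ 0 ∧ ∀ a b : Fin n, w a b ≠ 0 → toLex (q.1, q.2) ≤ toLex (a, b)) with hE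
  set NB : Finset (Fin n) → Finset (Fin n) := fun S =>
    (E.filter (fun q => q.1 ∈ S)).image Prod.snd with hNB
  obtain ⟨S, -, hS⟩ := Finset.exists_max_image (Finset.univ : Finset (Finset (Fin n)))
    (fun T => (T.card : ℤ) - ((NB T).card : ℤ)) ⟨∅, Finset.mem_univ _⟩
  have hSmax : ∀ T : Finset (Fin n),
      (T.card : ℤ) - ((NB T).card : ℤ) ≤ (S.card : ℤ) - ((NB S).card : ℤ) :=
    fun T => hS T (Finset.mem_univ T)
  by_cases hcov : (Finset.univ \ S).card + (NB S).card ≤ r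
  · refine ⟨Finset.univ \ S, NB S, hcov, ?_⟩
    intro w hwW _ i j hij
    have hqE : (i, j) ∈ E := by
      rw [hE, Finset.mem_filter]
      exact ⟨Finset.mem_univ _, w, hwW, hij.1, hij.2⟩
    by_cases hiS : i ∈ S
    · refine Or.inr ?_
      rw [hNB]
      exact Finset.mem_image.2 ⟨(i, j), Finset.mem_filter.2 ⟨hqE, hiS⟩, rfl⟩
    · exact Or.inl (Finset.mem_sdiff.2 ⟨Finset.mem_univ _, hiS⟩)
  · exfalso
    push_neg at hcov
    have hNempty : NB ∅ = ∅ := by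
      rw [hNB]
      simp
    have hd0 : ((NB S).card : ℤ) ≤ (S.card : ℤ) := by
      have := hSmax ∅
      rw [hNempty] at this
      simpa using this
    have hNS_le : (NB S).card ≤ S.card := by exact_mod_cast hd0
    set d : ℕ := S.card - (NB S).card with hdd
    -- Hall's theorem with d dummy vertices
    set t' : Fin n → Finset ((Fin n) ⊕ (Fin d)) := fun a =>
      ((NB {a}).map ⟨Sum.inl, Sum.inl_injective⟩) ∪
        (Finset.univ.map ⟨Sum.inr, Sum.inr_injective⟩) with ht'
    have hall : ∀ s : Finset (Fin n), s.card ≤ (s.biUnion t').card := by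
      intro s
      rcases s.eq_empty_or_nonempty with rfl | hne
      · simp
      · have hbi : s.biUnion t' = ((NB s).map ⟨Sum.inl, Sum.inl_injective⟩) ∪
            (Finset.univ.map ⟨Sum.inr, Sum.inr_injective⟩) := by
          ext x
          simp only [Finset.mem_biUnion, Finset.mem_union, Finset.mem_map,
            Function.Embedding.coeFn_mk, ht']
          constructor
          · rintro ⟨a, ha, (⟨y, hy, rfl⟩ | ⟨z, hz, rfl⟩)⟩
            · refine Or.inl ⟨y, ?_, rfl⟩
              rw [hNB] at hy ⊢
              obtain ⟨q, hq, rfl⟩ := Finset.mem_image.1 hy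
              rw [Finset.mem_filter] at hq
              refine Finset.mem_image.2 ⟨q, Finset.mem_filter.2 ⟨hq.1, ?_⟩, rfl⟩
              have : q.1 = a := Finset.mem_singleton.1 hq.2
              rwa [this]
            · exact Or.inr ⟨z, Finset.mem_univ _, rfl⟩
          · rintro (⟨y, hy, rfl⟩ | ⟨z, _, rfl⟩)
            · rw [hNB] at hy
              obtain ⟨q, hq, rfl⟩ := Finset.mem_image.1 hy
              rw [Finset.mem_filter] at hq
              refine ⟨q.1, hq.2, Or.inl ⟨q.2, ?_, rfl⟩⟩
              rw [hNB]
              exact Finset.mem_image.2 ⟨q, Finset.mem_filter.2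
                ⟨hq.1, Finset.mem_singleton.2 rfl⟩, rfl⟩
            · obtain ⟨a, ha⟩ := hne
              exact ⟨a, ha, Or.inr ⟨z, Finset.mem_univ _, rfl⟩⟩
        rw [hbi, Finset.card_union_of_disjoint, Finset.card_map, Finset.card_map,
          Finset.card_univ, Fintype.card_fin]
        · have h1 := hSmax s
          have h2 : S.card ≤ n := by
            simpa using Finset.card_le_card (Finset.subset_univ S)
          omega
        · rw [Finset.disjoint_left]
          rintro x hx hx'
          obtain ⟨y, -, rfl⟩ := Finset.mem_map.1 hx
          obtain ⟨z, -, hz⟩ := Finset.mem_map.1 hx'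
          simp at hz
    obtain ⟨f, hfinj, hf⟩ := (Finset.all_card_le_biUnion_card_iff_exists_injective t').1 hall
    -- matching rows
    set M : Finset (Fin n) := Finset.univ.filter (fun a => (f a).isLeft) with hM
    have hcompl_le : (Finset.univ.filter (fun a : Fin n => ¬ (f a).isLeft)).card ≤ d := by
      have hex : ∀ a ∈ Finset.univ.filter (fun a : Fin n => ¬ (f a).isLeft),
          ∃ z : Fin d, f a = Sum.inr z := by
        intro a ha
        rw [Finset.mem_filter] at ha
        rcases h : f a with y | z
        · rw [h] at ha; simp at ha
        · exact ⟨z, rfl⟩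
      choose g hg using hex
      have : (Finset.univ.filter (fun a : Fin n => ¬ (f a).isLeft)).card ≤
          (((Finset.univ : Finset (Fin d)).map ⟨Sum.inr, Sum.inr_injective⟩ :
            Finset ((Fin n) ⊕ (Fin d)))).card := by
        refine Finset.card_le_card_of_injOn f ?_ (hfinj.injOn)
        intro a ha
        exact Finset.mem_map.2 ⟨g a ha, Finset.mem_univ _, (hg a ha).symm⟩
      simpa using this
    have hMcard : r + 1 ≤ M.card := by
      have hsplit := Finset.card_filter_add_card_filter_not
        (s := (Finset.univ : Finset (Fin n))) (p := fun a => (f a).isLeft)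
      have huniv : (Finset.univ : Finset (Fin n)).card = n := by simp
      have h2 : S.card ≤ n := by
        simpa using Finset.card_le_card (Finset.subset_univ S)
      have hsd : (Finset.univ \ S).card = n - S.card := by
        rw [Finset.card_sdiff_of_subset (Finset.subset_univ S), huniv]
      have hMe : M.card = (Finset.univ.filter (fun a : Fin n => (f a).isLeft)).card := rfl
      omega
    obtain ⟨M', hM'sub, hM'card⟩ := Finset.exists_subset_card_eq hMcard
    set e := M'.orderIsoOfFin hM'card with he
    set i : Fin (r + 1) → Fin n := fun t => (e t : Fin n) with hidef
    have hi : StrictMono i := fun a b hab => by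
      exact Subtype.coe_lt_coe.2 (e.strictMono hab)
    have hpart : ∀ t, ∃ y : Fin n, f (i t) = Sum.inl y ∧ (i t, y) ∈ E := by
      intro t
      have hiM : i t ∈ M := hM'sub (e t).2
      rcases hfa : f (i t) with y | z
      · refine ⟨y, rfl, ?_⟩
        have hmem := hf (i t)
        rw [hfa] at hmem
        rw [ht'] at hmem
        rcases Finset.mem_union.1 hmem with h1 | h1
        · obtain ⟨y', hy', heq⟩ := Finset.mem_map.1 h1
          have hyy : y' = y := Sum.inl.inj heq
          subst hyy
          rw [hNB] at hy'
          obtain ⟨q, hq, hq2⟩ := Finset.mem_image.1 hy'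
          rw [Finset.mem_filter] at hq
          have hq1 : q.1 = i t := Finset.mem_singleton.1 hq.2
          have : q = (i t, y') := by
            rw [Prod.ext_iff]
            exact ⟨hq1, hq2⟩
          rw [this] at hq
          exact hq.1
        · obtain ⟨z, -, hz⟩ := Finset.mem_map.1 h1
          simp at hz
      · rw [hM, Finset.mem_filter, hfa] at hiM
        simp at hiM
    choose j hj1 hj2 using hpart
    have hjinj : Function.Injective j := by
      intro a b hab
      have h1 : f (i a) = f (i b) := by rw [hj1 a, hj1 b, hab]
      exact hi.injective (hfinj h1)
    have hwit : ∀ t, ∃ w, w ∈ W ∧ w (i t) (j t) ≠ 0 ∧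
        ∀ a b : Fin n, w a b ≠ 0 → toLex ((i t, j t) : Fin n × Fin n) ≤ toLex (a, b) := by
      intro t
      have := hj2 t
      rw [hE, Finset.mem_filter] at this
      obtain ⟨-, w, hwW, h1, h2⟩ := this
      exact ⟨w, hwW, h1, h2⟩
    choose w hwW hwl hwmin using hwit
    have hv : ∀ t a b, toLex ((a, b) : Fin n × Fin n) < toLex (i t, j t) → w t a b = 0 := by
      intro t a b hlt
      by_contra hz
      exact absurd (hwmin t a b hz) (not_le.2 hlt)
    obtain ⟨A, hAW, hdet⟩ := meshulam_aux_det W i hi j hjinj w hwW hwl hv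
    have h1 : r + 1 ≤ A.rank := meshulam_card_le_rank A i j hdet
    have h2 := hrank A hAW
    omega
end

section
/- (Croot–Lev–Pach rank lemma) Let q be a prime power, n a positive integer, and d a nonnegative real number. Let P be a polynomial in F_q[x_1, …, x_n] of degree at most q−1 in each variable and total degree at most d. Then for any finite subsets S, T of F_q^n, the S × T matrix whose (s, t) entry is P(s + t) has rank at most 2·m_{d/2}. -/
open Pointwise

lemma clp_aux_rank {F α : Type*} [Field F] {m l : Type*} [Fintype m] [Fintype l]
    (J : Finset α) (A : m → α → F) (B : α → l → F) :
    (Matrix.of fun s t => ∑ j ∈ J, A s j * B j t).rank ≤ J.card := by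
  classical
  have h : Matrix.of (fun s t => ∑ j ∈ J, A s j * B j t) =
      (Matrix.of fun s (j : J) => A s j) * (Matrix.of fun (j : J) t => B j t) := by
    ext s t
    simp only [Matrix.of_apply, Matrix.mul_apply]
    rw [← Finset.sum_attach J (fun j => A s j * B j t)]
    rfl
  rw [h]
  exact (Matrix.rank_mul_le_left _ _).trans
    ((Matrix.rank_le_card_width _).trans (by simp))

lemma clp_card_le_mCount (q n : ℕ) (e : ℝ) (J : Finset (Fin n → ℕ))
    (h : ∀ b ∈ J, (∀ i, b i ≤ q - 1) ∧ ((∑ i, b i : ℕ) : ℝ) ≤ e) :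
    J.card ≤ mCount q n e := by
  classical
  have hfin : {a : Fin n → ℕ | (∀ i, a i ≤ q - 1) ∧ ((∑ i, a i : ℕ) : ℝ) ≤ e}.Finite := by
    apply (Set.Finite.pi (fun _ : Fin n => Set.finite_Iic (q - 1))).subset
    intro a ha i _
    exact ha.1 i
  have : Finite {a : Fin n → ℕ // (∀ i, a i ≤ q - 1) ∧ ((∑ i, a i : ℕ) : ℝ) ≤ e} :=
    hfin.to_subtype
  have hinj : Function.Injective
      (fun b : ↥J => (⟨b.1, h b.1 b.2⟩ :
        {a : Fin n → ℕ // (∀ i, a i ≤ q - 1) ∧ ((∑ i, a i : ℕ) : ℝ) ≤ e})) := by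
    intro x y hxy
    simp only [Subtype.mk.injEq] at hxy
    exact Subtype.ext hxy
  have := Nat.card_le_card_of_injective _ hinj
  rwa [Nat.card_eq_finsetCard] at this

lemma clp_eval_add_expand {F : Type*} [CommRing F] {n : ℕ}
    (P : MvPolynomial (Fin n) F) (s t : Fin n → F) :
    MvPolynomial.eval (s + t) P =
      ∑ k ∈ P.support.sigma (fun a => Fintype.piFinset fun i => Finset.range (a i + 1)),
        (MvPolynomial.coeff k.1 P * ∏ i, ((k.1 i).choose (k.2 i) : F)) *
          ((∏ i, s i ^ k.2 i) * ∏ i, t i ^ (k.1 i - k.2 i)) := by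
  rw [MvPolynomial.eval_eq', Finset.sum_sigma]
  apply Finset.sum_congr rfl
  intro a _
  have hpow : ∀ i : Fin n, (s + t) i ^ a i =
      ∑ b ∈ Finset.range (a i + 1), s i ^ b * t i ^ (a i - b) * ((a i).choose b : F) := by
    intro i
    rw [Pi.add_apply, add_pow]
  rw [Finset.prod_congr rfl (fun i _ => hpow i), Finset.prod_univ_sum, Finset.mul_sum]
  apply Finset.sum_congr rfl
  intro b _
  rw [Finset.prod_mul_distrib, Finset.prod_mul_distrib]
  ring

/-- **Croot–Lev–Pach rank lemma.** -/
theorem croot_lev_pach_rank (q n : ℕ) (hq : IsPrimePow q) (hn : 0 < n) (d : ℝ) (hd : 0 ≤ d)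
    (F : Type*) [Field F] [Fintype F] (hF : Fintype.card F = q)
    (P : MvPolynomial (Fin n) F)
    (hdeg : ∀ i, P.degreeOf i ≤ q - 1) (htot : (P.totalDegree : ℝ) ≤ d)
    (S T : Finset (Fin n → F)) :
    Matrix.rank (Matrix.of fun (s : S) (t : T) => MvPolynomial.eval ((s : Fin n → F) + (t : Fin n → F)) P) ≤
      2 * mCount q n (d / 2) := by
  classical
  set K : Finset ((_ : Fin n →₀ ℕ) × (Fin n → ℕ)) :=
    P.support.sigma (fun a => Fintype.piFinset fun i => Finset.range (a i + 1)) with hK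
  set c : ((_ : Fin n →₀ ℕ) × (Fin n → ℕ)) → F :=
    fun k => MvPolynomial.coeff k.1 P * ∏ i, ((k.1 i).choose (k.2 i) : F) with hc
  set Es : (Fin n → F) → (Fin n → ℕ) → F := fun v e => ∏ i, v i ^ e i with hEs
  set sub : ((_ : Fin n →₀ ℕ) × (Fin n → ℕ)) → (Fin n → ℕ) :=
    fun k i => k.1 i - k.2 i with hsub
  -- facts about members of K
  have hKmem : ∀ k ∈ K, (∀ i, k.2 i ≤ k.1 i) ∧ (∀ i, k.1 i ≤ q - 1) ∧
      ((∑ i, k.1 i : ℕ) : ℝ) ≤ d := by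
    intro k hk
    rw [hK, Finset.mem_sigma] at hk
    obtain ⟨hk1, hk2⟩ := hk
    have hba : ∀ i, k.2 i ≤ k.1 i := by
      intro i
      exact Nat.lt_succ_iff.mp (Finset.mem_range.mp ((Fintype.mem_piFinset.mp hk2) i))
    have hup : ∀ i, k.1 i ≤ q - 1 := by
      intro i
      refine le_trans ?_ (hdeg i)
      rw [MvPolynomial.degreeOf_eq_sup]
      exact Finset.le_sup (f := fun m => m i) hk1
    have htd : (∑ i, k.1 i) ≤ P.totalDegree := by
      have h1 := MvPolynomial.le_totalDegree hk1
      rwa [Finsupp.sum_fintype _ _ (fun _ => rfl)] at h1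
    refine ⟨hba, hup, ?_⟩
    exact le_trans (by exact_mod_cast htd) htot
  set p : ((_ : Fin n →₀ ℕ) × (Fin n → ℕ)) → Prop :=
    fun k => ((∑ i, k.2 i : ℕ) : ℝ) ≤ d / 2 with hp
  set K₁ : Finset _ := K.filter p with hK₁
  set K₂ : Finset _ := K.filter (fun k => ¬ p k) with hK₂
  set J₁ : Finset (Fin n → ℕ) := K₁.image (fun k => k.2) with hJ₁
  set J₂ : Finset (Fin n → ℕ) := K₂.image sub with hJ₂
  set A : ↥S → ((Fin n → ℕ) ⊕ (Fin n → ℕ)) → F := fun s j =>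
    Sum.elim (fun b => Es s b)
      (fun cv => ∑ k ∈ K₂.filter (fun k => sub k = cv), c k * Es (s : Fin n → F) k.2) j
    with hA
  set B : ((Fin n → ℕ) ⊕ (Fin n → ℕ)) → ↥T → F := fun j t =>
    Sum.elim (fun b => ∑ k ∈ K₁.filter (fun k => k.2 = b), c k * Es (t : Fin n → F) (sub k))
      (fun cv => Es t cv) j
    with hB
  have key : (Matrix.of fun (s : S) (t : T) =>
        MvPolynomial.eval ((s : Fin n → F) + (t : Fin n → F)) P) =
      Matrix.of fun (s : S) (t : T) => ∑ j ∈ J₁.disjSum J₂, A s j * B j t := by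
    ext s t
    simp only [Matrix.of_apply]
    rw [clp_eval_add_expand P (s : Fin n → F) (t : Fin n → F)]
    rw [Finset.sum_disjSum]
    have e1 : ∑ k ∈ K₁, c k * (Es (s : Fin n → F) k.2 * Es (t : Fin n → F) (sub k)) =
        ∑ b ∈ J₁, A s (Sum.inl b) * B (Sum.inl b) t := by
      rw [← Finset.sum_fiberwise_of_maps_to (g := fun k => k.2)
        (fun k hk => Finset.mem_image_of_mem (fun k => k.2) hk)
        (fun k => c k * (Es (s : Fin n → F) k.2 * Es (t : Fin n → F) (sub k)))]
      apply Finset.sum_congr rfl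
      intro b _
      simp only [hA, hB, Sum.elim_inl]
      rw [Finset.mul_sum]
      apply Finset.sum_congr rfl
      intro k hk
      have : k.2 = b := (Finset.mem_filter.mp hk).2
      rw [← this]
      ring
    have e2 : ∑ k ∈ K₂, c k * (Es (s : Fin n → F) k.2 * Es (t : Fin n → F) (sub k)) =
        ∑ cv ∈ J₂, A s (Sum.inr cv) * B (Sum.inr cv) t := by
      rw [← Finset.sum_fiberwise_of_maps_to (g := sub)
        (fun k hk => Finset.mem_image_of_mem sub hk)
        (fun k => c k * (Es (s : Fin n → F) k.2 * Es (t : Fin n → F) (sub k)))]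
      apply Finset.sum_congr rfl
      intro cv _
      simp only [hA, hB, Sum.elim_inr]
      rw [Finset.sum_mul]
      apply Finset.sum_congr rfl
      intro k hk
      have : sub k = cv := (Finset.mem_filter.mp hk).2
      rw [← this]
      ring
    rw [← e1, ← e2, hK₁, hK₂, Finset.sum_filter_add_sum_filter_not, ← hK]
  rw [key]
  refine (clp_aux_rank (J₁.disjSum J₂) A B).trans ?_
  rw [Finset.card_disjSum]
  have h1 : J₁.card ≤ mCount q n (d / 2) := by
    apply clp_card_le_mCount
    intro b hb
    obtain ⟨k, hk, rfl⟩ := Finset.mem_image.mp hb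
    obtain ⟨hkK, hkp⟩ := Finset.mem_filter.mp hk
    obtain ⟨hba, hup, _⟩ := hKmem k hkK
    exact ⟨fun i => le_trans (hba i) (hup i), hkp⟩
  have h2 : J₂.card ≤ mCount q n (d / 2) := by
    apply clp_card_le_mCount
    intro b hb
    obtain ⟨k, hk, rfl⟩ := Finset.mem_image.mp hb
    obtain ⟨hkK, hkp⟩ := Finset.mem_filter.mp hk
    obtain ⟨hba, hup, htd⟩ := hKmem k hkK
    refine ⟨fun i => le_trans (Nat.sub_le _ _) (hup i), ?_⟩
    have hsumeq : (∑ i, sub k i) + (∑ i, k.2 i) = ∑ i, k.1 i := by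
      rw [← Finset.sum_add_distrib]
      exact Finset.sum_congr rfl (fun i _ => Nat.sub_add_cancel (hba i))
    have hcast : ((∑ i, sub k i : ℕ) : ℝ) + ((∑ i, k.2 i : ℕ) : ℝ) =
        ((∑ i, k.1 i : ℕ) : ℝ) := by exact_mod_cast congrArg (fun x : ℕ => (x : ℝ)) hsumeq
    have hgt : ¬ ((∑ i, k.2 i : ℕ) : ℝ) ≤ d / 2 := hkp
    push_neg at hgt
    linarith
  omega
end
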